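/- arXiv:1512.03038 — 5 statements merged into one kernel-verified Lean document; each statement's English description precedes it below -/
import Mathlib

section
/- Let G be a finite abelian group of order n, let p be the smallest prime divisor of n, and let h ≥ 2 and m ≥ 1 be integers with p > hm − h + 1. Then for an m-element subset A of G one has |hA| = hm − h + 1 if and only if A is an arithmetic progression in G, i.e., A = {a, a+g, a+2g, …, a+(m−1)g} for some elements a, g of G. -/
/-- The `h`-fold sumset of a finite subset `A` of an abelian group: all sums of `h`
elements of `A` (with repetition allowed). -/
def foldSum {G : Type*} [AddCommGroup G] [DecidableEq G] (h : ℕ) (A : Finset G) : Finset G :=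
  (Fintype.piFinset fun _ : Fin h => A).image fun f => ∑ i, f i

open Finset Pointwise

set_option linter.unusedSectionVars false
set_option maxHeartbeats 1000000

namespace Stmt1

variable {G : Type*} [AddCommGroup G] [DecidableEq G]


/-- arithmetic progression -/
def AP (a g : G) (k : ℕ) : Finset G := (Finset.range k).image (fun i => a + i • g)

lemma mem_AP {a g x : G} {k : ℕ} : x ∈ AP a g k ↔ ∃ i < k, a + i • g = x := by
  simp [AP]

lemma AP_nonempty {a g : G} {k : ℕ} (hk : 0 < k) : (AP a g k).Nonempty :=
  ⟨a + 0 • g, mem_AP.2 ⟨0, hk, rfl⟩⟩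

lemma nsmul_eq_zero_iff_dvd {g : G} {i : ℕ} : i • g = 0 ↔ addOrderOf g ∣ i :=
  ⟨addOrderOf_dvd_of_nsmul_eq_zero, fun h => by
    obtain ⟨c, rfl⟩ := h
    rw [mul_nsmul, addOrderOf_nsmul_eq_zero, nsmul_zero]⟩

private lemma nsmul_inj_aux {g : G} {i j : ℕ} (hj : j < addOrderOf g)
    (hij : i ≤ j) (h : i • g = j • g) : i = j := by
  have heq : j • g = (j - i) • g + i • g := by rw [← add_nsmul, Nat.sub_add_cancel hij]
  have h2 : (j - i) • g = 0 := by
    rw [heq] at h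
    have : (0:G) + i • g = (j-i) • g + i • g := by rw [zero_add]; exact h
    exact (add_right_cancel this).symm
  have hdvd := nsmul_eq_zero_iff_dvd.1 h2
  have := Nat.eq_zero_of_dvd_of_lt hdvd
  omega

lemma nsmul_inj {g : G} {i j : ℕ} (hi : i < addOrderOf g) (hj : j < addOrderOf g)
    (h : i • g = j • g) : i = j := by
  rcases le_total i j with hij | hij
  · exact nsmul_inj_aux hj hij h
  · exact (nsmul_inj_aux hi hij h.symm).symm

lemma AP_card {a g : G} {k : ℕ} (hk : k ≤ addOrderOf g) : (AP a g k).card = k := by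
  rw [AP, Finset.card_image_of_injOn, Finset.card_range]
  intro i hi j hj hij
  simp only [Finset.coe_range, Set.mem_Iio] at hi hj
  exact nsmul_inj (lt_of_lt_of_le hi hk) (lt_of_lt_of_le hj hk) (by
    have := add_left_cancel hij; exact this)

lemma AP_split {a g : G} {j k : ℕ} : AP a g (j + k) = AP a g j ∪ AP (a + j • g) g k := by
  ext x
  simp only [mem_AP, Finset.mem_union]
  constructor
  · rintro ⟨i, hi, rfl⟩
    rcases lt_or_ge i j with h | h
    · exact Or.inl ⟨i, h, rfl⟩
    · refine Or.inr ⟨i - j, by omega, ?_⟩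
      rw [add_assoc, ← add_nsmul, Nat.add_sub_cancel' h]
  · rintro (⟨i, hi, rfl⟩ | ⟨i, hi, rfl⟩)
    · exact ⟨i, by omega, rfl⟩
    · exact ⟨j + i, by omega, by rw [add_nsmul, add_assoc]⟩

lemma AP_add_AP {a b g : G} {j k : ℕ} (hj : 0 < j) (hk : 0 < k) :
    AP a g j + AP b g k = AP (a + b) g (j + k - 1) := by
  ext x
  simp only [Finset.mem_add, mem_AP]
  constructor
  · rintro ⟨y, ⟨i, hi, rfl⟩, z, ⟨l, hl, rfl⟩, rfl⟩
    exact ⟨i + l, by omega, by rw [add_nsmul]; abel⟩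
  · rintro ⟨i, hi, rfl⟩
    refine ⟨a + (min i (j-1)) • g, ⟨min i (j-1), by omega, rfl⟩,
            b + (i - min i (j-1)) • g, ⟨i - min i (j-1), by omega, rfl⟩, ?_⟩
    rw [add_assoc, ← add_assoc (min i (j-1) • g), add_comm (min i (j-1) • g), add_assoc,
      ← add_nsmul, Nat.add_sub_cancel' (Nat.min_le_left _ _), ← add_assoc]

/-- reverse of an AP -/
lemma AP_rev {a g : G} {k : ℕ} : AP a g k = AP (a + (k - 1) • g) (-g) k := by
  ext x
  simp only [mem_AP]
  constructor
  · rintro ⟨i, hi, rfl⟩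
    refine ⟨k - 1 - i, by omega, ?_⟩
    have h1 : (k-1) • g = (k-1-i) • g + i • g := by rw [← add_nsmul]; congr 1; omega
    rw [smul_neg, h1]
    abel
  · rintro ⟨i, hi, rfl⟩
    refine ⟨k - 1 - i, by omega, ?_⟩
    have h1 : (k-1) • g = (k-1-i) • g + i • g := by rw [← add_nsmul]; congr 1; omega
    rw [smul_neg, h1]
    abel

lemma AP_image_add {a g c : G} {k : ℕ} : (AP a g k).image (· + c) = AP (a + c) g k := by
  rw [AP, AP, Finset.image_image]
  congr 1
  ext i
  simp only [Function.comp_apply]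
  abel_nf

lemma AP_one {a g : G} : AP a g 1 = {a} := by
  simp [AP]


/-- if a finite nonempty set is closed under adding `g`, it has at least `addOrderOf g` elements -/
lemma orbit_card {Y : Finset G} (hY : Y.Nonempty) {g : G} (hg : 0 < addOrderOf g)
    (hclosed : ∀ y ∈ Y, y + g ∈ Y) : addOrderOf g ≤ Y.card := by
  obtain ⟨y0, hy0⟩ := hY
  have hmem : ∀ k : ℕ, y0 + k • g ∈ Y := by
    intro k
    induction k with
    | zero => simpa using hy0
    | succ n ih => rw [succ_nsmul, ← add_assoc]; exact hclosed _ ih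
  have hsub : (Finset.range (addOrderOf g)).image (fun i => y0 + i • g) ⊆ Y := by
    intro x hx
    obtain ⟨i, _, rfl⟩ := Finset.mem_image.1 hx
    exact hmem i
  have hcard : ((Finset.range (addOrderOf g)).image (fun i => y0 + i • g)).card = addOrderOf g := by
    rw [Finset.card_image_of_injOn, Finset.card_range]
    intro i hi j hj hij
    simp only [Finset.coe_range, Set.mem_Iio] at hi hj
    exact nsmul_inj hi hj (add_left_cancel hij)
  calc addOrderOf g = _ := hcard.symm
    _ ≤ Y.card := Finset.card_le_card hsub

/-- no growth implies closure -/
lemma closure_of_no_growth {Y : Finset G} {g : G}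
    (h : (Y ∪ Y.image (· + g)).card ≤ Y.card) : ∀ y ∈ Y, y + g ∈ Y := by
  have h1 : Y ∪ Y.image (· + g) = Y :=
    (Finset.eq_of_subset_of_card_le Finset.subset_union_left h).symm
  intro y hy
  have : y + g ∈ Y ∪ Y.image (· + g) := Finset.mem_union_right _ (Finset.mem_image_of_mem _ hy)
  rwa [← h1]

/-- growth lemma: either the union with the translate grows, or the order is small -/
lemma grow {Y : Finset G} (hY : Y.Nonempty) {g : G} (hg : 0 < addOrderOf g)
    (h : (Y ∪ Y.image (· + g)).card ≤ Y.card) : addOrderOf g ≤ Y.card :=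
  orbit_card hY hg (closure_of_no_growth h)

/-- the CON lemma: if `|A ∪ (A+g)| ≤ |A| + 1` and `g` has large order, `A` is an AP -/
lemma con {A : Finset G} (hA : A.Nonempty) {g : G}
    (hord : A.card < addOrderOf g)
    (hcard : (A ∪ A.image (· + g)).card ≤ A.card + 1) :
    ∃ a, A = AP a g A.card := by
  have hgpos : 0 < addOrderOf g := lt_of_le_of_lt (Nat.zero_le _) hord
  have himg : (A.image (· + g)).card = A.card :=
    Finset.card_image_of_injective _ (add_left_injective g)
  have hex : ∃ a0 ∈ A, a0 ∉ A.image (· + g) := by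
    by_contra hc
    push_neg at hc
    have heq : A = A.image (· + g) := Finset.eq_of_subset_of_card_le hc (le_of_eq himg)
    have hclosed : ∀ y ∈ A, y + g ∈ A := by
      intro y hy
      rw [heq]
      exact Finset.mem_image_of_mem _ hy
    have := orbit_card hA hgpos hclosed
    omega
  obtain ⟨a0, ha0A, ha0⟩ := hex
  have huniq : ∀ a ∈ A, a ∉ A.image (· + g) → a = a0 := by
    intro a ha hai
    by_contra hne
    have h2 : ({a, a0} : Finset G) ⊆ A \ A.image (· + g) := by
      intro x hx
      rcases Finset.mem_insert.1 hx with rfl | hx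
      · exact Finset.mem_sdiff.2 ⟨ha, hai⟩
      · rw [Finset.mem_singleton.1 hx]
        exact Finset.mem_sdiff.2 ⟨ha0A, ha0⟩
    have h3 : 2 ≤ (A \ A.image (· + g)).card := by
      have := Finset.card_le_card h2
      rwa [Finset.card_insert_of_notMem (by simpa using hne), Finset.card_singleton] at this
    have h4 : (A ∪ A.image (· + g)).card
        = (A \ A.image (· + g)).card + (A.image (· + g)).card :=
      (Finset.card_sdiff_add_card _ _).symm
    omega
  have hwalk : ∀ a ∈ A, ∃ k < A.card, a = a0 + k • g := by
    intro a ha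
    have hstop : ∃ k, k < A.card ∧ a - (k+1) • g ∉ A := by
      by_contra hc
      push_neg at hc
      have hsub : (Finset.range (A.card + 1)).image (fun i => a - i • g) ⊆ A := by
        intro x hx
        obtain ⟨i, hi, rfl⟩ := Finset.mem_image.1 hx
        rw [Finset.mem_range] at hi
        cases i with
        | zero => simpa using ha
        | succ n => exact hc n (by omega)
      have hcardim : ((Finset.range (A.card + 1)).image (fun i => a - i • g)).card
          = A.card + 1 := by
        rw [Finset.card_image_of_injOn, Finset.card_range]
        intro i hi j hj hij
        simp only [Finset.coe_range, Set.mem_Iio] at hi hj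
        have : i • g = j • g := by
          have hij' : a - i • g = a - j • g := hij
          have h5 : a - i • g - (a - j • g) = 0 := by rw [hij']; abel
          have h6 : j • g - i • g = 0 := by rw [← h5]; abel
          have := sub_eq_zero.1 h6
          exact this.symm
        exact nsmul_inj (by omega) (by omega) this
      have := Finset.card_le_card hsub
      omega
    set P := fun k => k < A.card ∧ a - (k+1) • g ∉ A with hP
    set k0 := Nat.find hstop with hk0
    obtain ⟨hk0lt, hk0notmem⟩ := Nat.find_spec hstop
    have hprev : ∀ j < k0, a - (j+1) • g ∈ A := by
      intro j hj
      have := Nat.find_min hstop hj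
      simp only [not_and, not_not] at this
      exact this (by omega)
    have hxA : a - k0 • g ∈ A := by
      cases hk : k0 with
      | zero => simpa using ha
      | succ n =>
        have := hprev n (by omega)
        simpa using this
    have hxnot : a - k0 • g ∉ A.image (· + g) := by
      intro hmem
      obtain ⟨y, hy, hyeq⟩ := Finset.mem_image.1 hmem
      apply hk0notmem
      have : y = a - (k0+1) • g := by
        have : y = a - k0 • g - g := by rw [← hyeq]; abel
        rw [this, succ_nsmul]
        abel
      rwa [← this]
    have := huniq _ hxA hxnot
    exact ⟨k0, hk0lt, by rw [← this]; abel⟩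
  have hsub : A ⊆ AP a0 g A.card := by
    intro a ha
    obtain ⟨k, hk, rfl⟩ := hwalk a ha
    exact mem_AP.2 ⟨k, hk, rfl⟩
  exact ⟨a0, Finset.eq_of_subset_of_card_le hsub
    (le_trans Finset.card_image_le (by rw [Finset.card_range]))⟩


/-- Cauchy-Davenport for groups with all orders at least `p`. -/
lemma cd {p : ℕ} (hord : ∀ x : G, x ≠ 0 → p ≤ addOrderOf x)
    {s t : Finset G} (hs : s.Nonempty) (ht : t.Nonempty) (hlt : (s + t).card < p) :
    s.card + t.card ≤ (s + t).card + 1 := by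
  have hmin : (p : ℕ∞) ≤ AddMonoid.minOrder G :=
    AddMonoid.le_minOrder.2 (fun a ha _ => by exact_mod_cast hord a ha)
  have hcd := cauchy_davenport_minOrder_add hs ht
  rcases min_le_iff.1 hcd with h | h
  · have : (p : ℕ∞) ≤ ((s + t).card : ℕ∞) := le_trans hmin h
    have : p ≤ (s + t).card := by exact_mod_cast this
    omega
  · have : s.card + t.card - 1 ≤ (s + t).card := by exact_mod_cast h
    have := hs.card_pos
    omega

lemma AP_mono {a g : G} {j k : ℕ} (h : j ≤ k) : AP a g j ⊆ AP a g k := by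
  intro x hx
  obtain ⟨i, hi, rfl⟩ := mem_AP.1 hx
  exact mem_AP.2 ⟨i, by omega, rfl⟩

lemma AP_pair {a g : G} : AP a g 2 = {a, a + g} := by
  ext x
  simp only [mem_AP, Finset.mem_insert, Finset.mem_singleton]
  constructor
  · rintro ⟨i, hi, rfl⟩
    interval_cases i
    · left; simp
    · right; simp
  · rintro (rfl | rfl)
    · exact ⟨0, by omega, by simp⟩
    · exact ⟨1, by omega, by simp⟩

lemma add_AP_pair_card {X : Finset G} {a g : G} :
    (X + AP a g 2).card = (X ∪ X.image (· + g)).card := by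
  rw [AP_pair]
  have h1 : X + ({a, a + g} : Finset G) = (X ∪ X.image (· + g)).image (· + a) := by
    ext x
    simp only [Finset.mem_add, Finset.mem_insert, Finset.mem_singleton, Finset.mem_image,
      Finset.mem_union]
    constructor
    · rintro ⟨y, hy, z, hz, rfl⟩
      rcases hz with rfl | rfl
      · exact ⟨y, Or.inl hy, rfl⟩
      · exact ⟨y + g, Or.inr ⟨y, hy, rfl⟩, by abel⟩
    · rintro ⟨y, hy | ⟨z, hz, rfl⟩, rfl⟩
      · exact ⟨y, hy, a, Or.inl rfl, rfl⟩
      · exact ⟨z, hz, a + g, Or.inr rfl, by abel⟩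
  rw [h1, Finset.card_image_of_injective _ (add_left_injective a)]

lemma AP_shift_image {a g : G} {k : ℕ} : (AP a g k).image (· + g) = AP (a + g) g k :=
  AP_image_add

/-- the segment lemma -/
lemma seg {p : ℕ} (hord : ∀ x : G, x ≠ 0 → p ≤ addOrderOf x)
    {X : Finset G} (hX : X.Nonempty) {a g : G} (hg : g ≠ 0) {k : ℕ} (hk : 2 ≤ k)
    (hlt : (X + AP a g k).card < p) :
    (X ∪ X.image (· + g)).card + k ≤ (X + AP a g k).card + 2 := by
  have hgord : p ≤ addOrderOf g := hord g hg
  have hgpos : 0 < addOrderOf g := by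
    have : 0 < p := by
      by_contra h0
      push_neg at h0
      omega
    omega
  obtain ⟨j, rfl⟩ : ∃ j, k = 2 + j := ⟨k - 2, by omega⟩
  clear hk
  induction j with
  | zero => rw [add_AP_pair_card]
  | succ n ih =>
    have hsub1 : AP a g (2 + n) ⊆ AP a g (2 + (n+1)) := AP_mono (by omega)
    have hsub2 : (X + AP a g (2+n)) ∪ (X + AP a g (2+n)).image (· + g) ⊆ X + AP a g (2+(n+1)) := by
      apply Finset.union_subset
      · exact Finset.add_subset_add_left hsub1
      · intro x hx
        obtain ⟨y, hy, rfl⟩ := Finset.mem_image.1 hx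
        obtain ⟨u, hu, v, hv, rfl⟩ := Finset.mem_add.1 hy
        obtain ⟨i, hi, rfl⟩ := mem_AP.1 hv
        refine Finset.mem_add.2 ⟨u, hu, a + (i+1) • g, mem_AP.2 ⟨i+1, by omega, rfl⟩, ?_⟩
        rw [succ_nsmul]
        abel
    have hYlt : (X + AP a g (2+n)).card < p :=
      lt_of_le_of_lt (Finset.card_le_card (Finset.add_subset_add_left hsub1)) hlt
    have hYne : (X + AP a g (2+n)).Nonempty := by
      obtain ⟨x, hx⟩ := hX
      exact ⟨x + (a + 0 • g), Finset.add_mem_add hx (mem_AP.2 ⟨0, by omega, rfl⟩)⟩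
    have hgrow : (X + AP a g (2+n)).card + 1
        ≤ ((X + AP a g (2+n)) ∪ (X + AP a g (2+n)).image (· + g)).card := by
      by_contra hc
      push_neg at hc
      have := grow hYne hgpos (by omega)
      have := Finset.card_le_card hsub2
      omega
    have := Finset.card_le_card hsub2
    have := ih hYlt
    omega

/-- segment + con: critical pair with an AP implies the other is an AP -/
lemma seg_con {p : ℕ} (hord : ∀ x : G, x ≠ 0 → p ≤ addOrderOf x)
    {X : Finset G} (hX : X.Nonempty) {a g : G} (hg : g ≠ 0) {k : ℕ} (hk : 2 ≤ k)
    (hlt : (X + AP a g k).card < p)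
    (hcrit : (X + AP a g k).card + 1 = X.card + k) :
    ∃ x0, X = AP x0 g X.card := by
  have h1 := seg hord hX hg hk hlt
  have hordg : p ≤ addOrderOf g := hord g hg
  apply con hX (by omega)
  omega


lemma neg_AP {a g : G} {k : ℕ} : -(AP a g k) = AP (-a) (-g) k := by
  ext x
  simp only [Finset.mem_neg, mem_AP]
  constructor
  · rintro ⟨y, ⟨i, hi, rfl⟩, rfl⟩
    exact ⟨i, hi, by rw [smul_neg]; abel⟩
  · rintro ⟨i, hi, rfl⟩
    exact ⟨a + i • g, ⟨i, hi, rfl⟩, by rw [smul_neg]; abel⟩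

lemma zmod_hord {q : ℕ} (hq : q.Prime) : ∀ x : ZMod q, x ≠ 0 → q ≤ addOrderOf x := by
  haveI : NeZero q := ⟨hq.ne_zero⟩
  intro x hx
  have h1 : addOrderOf x ∣ q := by
    have := addOrderOf_dvd_card (x := x)
    rwa [ZMod.card] at this
  rcases hq.eq_one_or_self_of_dvd _ h1 with h | h
  · exact absurd (AddMonoid.addOrderOf_eq_one_iff.1 h) hx
  · omega

/-- complement engine: a critical pair summing to an interval in `ZMod q` consists of intervals
(one half: the conclusion for `B`) -/
lemma E_half {q : ℕ} (hq : q.Prime) {A B : Finset (ZMod q)} (hA2 : 2 ≤ A.card) (hB2 : 2 ≤ B.card)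
    {u : ZMod q} (hsum : A + B = AP u 1 (A.card + B.card - 1))
    (hsmall : A.card + B.card + 1 ≤ q) :
    ∃ b0, B = AP b0 1 B.card := by
  haveI : NeZero q := ⟨hq.ne_zero⟩
  haveI : Fact (1 < q) := ⟨hq.one_lt⟩
  have hordz := zmod_hord hq
  have hord1 : addOrderOf (1 : ZMod q) = q := ZMod.addOrderOf_one q
  set N := A.card + B.card - 1 with hN
  have hNq : N + 2 ≤ q := by omega
  have hK : True := trivial
  have hcardI : (AP u 1 N).card = N := AP_card (by omega)
  have hcardK : (AP (u + N • (1 : ZMod q)) 1 (q - N)).card = q - N := AP_card (by omega)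
  have huniv : AP u 1 q = Finset.univ := by
    apply Finset.eq_univ_of_card
    rw [AP_card (by omega)]
    exact (ZMod.card q).symm
  have hsplit : AP u 1 q = AP u 1 N ∪ AP (u + N • (1 : ZMod q)) 1 (q - N) := by
    have h0 : AP u 1 (N + (q - N)) = AP u 1 N ∪ AP (u + N • (1 : ZMod q)) 1 (q - N) := AP_split
    rwa [show N + (q - N) = q from by omega] at h0
  have hinter : AP u 1 N ∩ AP (u + N • (1 : ZMod q)) 1 (q - N) = ∅ := by
    have h1 : (AP u 1 N ∪ AP (u + N • (1 : ZMod q)) 1 (q - N)).card = q := by rw [← hsplit, AP_card (by omega)]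
    have h2 := Finset.card_union_add_card_inter (AP u 1 N) (AP (u + N • (1 : ZMod q)) 1 (q - N))
    rw [h1, hcardI, hcardK] at h2
    have : (AP u 1 N ∩ AP (u + N • (1 : ZMod q)) 1 (q - N)).card = 0 := by omega
    exact Finset.card_eq_zero.1 this
  have hdisj : ∀ x ∈ AP (u + N • (1 : ZMod q)) 1 (q - N), x ∉ A + B := by
    intro x hxK hxAB
    rw [hsum] at hxAB
    have : x ∈ AP u 1 N ∩ AP (u + N • (1 : ZMod q)) 1 (q - N) := Finset.mem_inter.2 ⟨hxAB, hxK⟩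
    rw [hinter] at this
    exact absurd this (Finset.notMem_empty x)
  have hKBsub : (-B) + AP (u + N • (1 : ZMod q)) 1 (q - N) ⊆ Aᶜ := by
    intro x hx
    obtain ⟨y, hy, z, hz, rfl⟩ := Finset.mem_add.1 hx
    obtain ⟨b, hb, rfl⟩ := Finset.mem_neg.1 hy
    rw [Finset.mem_compl]
    intro hxA
    exact hdisj z hz (by
      refine Finset.mem_add.2 ⟨-b + z, hxA, b, hb, by abel⟩)
  have hcardcompl : (Aᶜ : Finset (ZMod q)).card = q - A.card := by
    rw [Finset.card_compl, Fintype.card_eq_nat_card, Nat.card_zmod]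
  have hKBlt : ((-B) + AP (u + N • (1 : ZMod q)) 1 (q - N)).card < q := by
    have := Finset.card_le_card hKBsub
    omega
  have hnegB : (-B).card = B.card := Finset.card_neg B
  have hnegBne : (-B).Nonempty := Finset.Nonempty.neg (Finset.card_pos.1 (by omega))
  have hcd := cd hordz hnegBne (AP_nonempty (a := u + N • (1 : ZMod q)) (g := 1) (by omega)) hKBlt
  have hcardKB : ((-B) + AP (u + N • (1 : ZMod q)) 1 (q - N)).card = q - A.card := by
    have := Finset.card_le_card hKBsub
    rw [hnegB, hcardK] at hcd
    omega
  have hone : (1 : ZMod q) ≠ 0 := one_ne_zero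
  obtain ⟨x0, hx0⟩ := seg_con hordz hnegBne hone (show 2 ≤ q - N from by omega)
      (show ((-B) + AP (u + N • (1 : ZMod q)) 1 (q - N)).card < q from hKBlt)
      (show _ + 1 = _ from by rw [hcardKB, hnegB]; omega)
  have h8 : -B = AP x0 1 B.card := by rw [← hnegB]; exact hx0
  have h9 : B = - AP x0 1 B.card := by rw [← h8, neg_neg]
  refine ⟨-x0 + (B.card - 1) • (-(1:ZMod q)), ?_⟩
  nth_rewrite 1 [h9]
  rw [neg_AP, AP_rev (a := -x0) (g := -(1 : ZMod q)) (k := B.card), neg_neg]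

lemma nsmul_mod {g : G} (k : ℕ) : k • g = (k % addOrderOf g) • g := by
  conv_lhs => rw [← Nat.div_add_mod k (addOrderOf g)]
  rw [add_nsmul, mul_nsmul, addOrderOf_nsmul_eq_zero, smul_zero, zero_add]

lemma nsmul_eq_iff_mod {g : G} (hd : 0 < addOrderOf g) {i j : ℕ} :
    i • g = j • g ↔ i % addOrderOf g = j % addOrderOf g := by
  constructor
  · intro h
    rw [nsmul_mod i, nsmul_mod j] at h
    exact nsmul_inj (Nat.mod_lt _ hd) (Nat.mod_lt _ hd) h
  · intro h
    rw [nsmul_mod i, nsmul_mod j, h]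

lemma modeq_eq_of_lt {n a b : ℕ} (h : a ≡ b [MOD n]) (ha : a < n) (hb : b < n) : a = b := by
  have h' : a % n = b % n := h
  rwa [Nat.mod_eq_of_lt ha, Nat.mod_eq_of_lt hb] at h'

/-- unsplit: a subset of an initial segment of ℕ whose image in `ZMod q` is an interval
is itself an interval -/
lemma unsplit {q M : ℕ} (hq : q.Prime) (hbig : 2*M + 2 ≤ q) {S : Finset ℕ}
    (hSsub : S ⊆ Finset.range M) {α : ZMod q}
    (himg : S.image (Nat.cast : ℕ → ZMod q) = AP α 1 S.card) :
    ∃ s0, S = (Finset.range S.card).image (· + s0) := by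
  haveI : NeZero q := ⟨hq.ne_zero⟩
  have hkM : S.card ≤ M := by
    have := Finset.card_le_card hSsub
    simpa using this
  have hu : α.val < q := ZMod.val_lt α
  have hαu : ((α.val : ℕ) : ZMod q) = α := ZMod.natCast_zmod_val α
  have hmem : ∀ s ∈ S, ∃ i < S.card, s ≡ α.val + i [MOD q] := by
    intro s hs
    have h1 : (s : ZMod q) ∈ AP α 1 S.card := by
      rw [← himg]; exact Finset.mem_image_of_mem _ hs
    obtain ⟨i, hi, hieq⟩ := mem_AP.1 h1
    refine ⟨i, hi, ?_⟩
    have h2 : ((α.val + i : ℕ) : ZMod q) = (s : ZMod q) := by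
      rw [Nat.cast_add, hαu, ← hieq, nsmul_eq_mul, mul_one]
    exact ((ZMod.natCast_eq_natCast_iff _ _ _).1 h2).symm
  by_cases hcase : α.val + S.card ≤ q
  · refine ⟨α.val, ?_⟩
    have hsub : S ⊆ (Finset.range S.card).image (· + α.val) := by
      intro s hs
      obtain ⟨i, hi, hmod⟩ := hmem s hs
      have hsM : s < M := Finset.mem_range.1 (hSsub hs)
      have : s = α.val + i := modeq_eq_of_lt hmod (by omega) (by omega)
      exact Finset.mem_image.2 ⟨i, Finset.mem_range.2 hi, by omega⟩
    apply Finset.eq_of_subset_of_card_le hsub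
    calc ((Finset.range S.card).image (· + α.val)).card ≤ S.card := by
          apply le_trans Finset.card_image_le
          simp
      _ ≤ _ := le_rfl
  · exfalso
    push_neg at hcase
    have hforced : ∀ s ∈ S, ∃ i, i < S.card ∧ q - α.val ≤ i ∧ s + q = α.val + i := by
      intro s hs
      obtain ⟨i, hi, hmod⟩ := hmem s hs
      have hsM : s < M := Finset.mem_range.1 (hSsub hs)
      rcases lt_or_ge (α.val + i) q with hlt | hge
      · exact absurd (modeq_eq_of_lt hmod (by omega) hlt) (by omega)
      · have ht : α.val + i - q < q := by omega
        have hteq : (α.val + i - q) + q = α.val + i := by omega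
        have htmod : α.val + i - q ≡ α.val + i [MOD q] := by
          calc α.val + i - q ≡ (α.val + i - q) + q [MOD q] := (Nat.add_mod_right _ q).symm
            _ = α.val + i := hteq
        have heq2 : s = α.val + i - q := modeq_eq_of_lt (hmod.trans htmod.symm) (by omega) ht
        exact ⟨i, hi, by omega, by omega⟩
    have hinj : ∀ s ∈ S, s + q - α.val ∈ Finset.Ico (q - α.val) S.card := by
      intro s hs
      obtain ⟨i, h1, h2, h3⟩ := hforced s hs
      have : i = s + q - α.val := by omega
      rw [← this]
      exact Finset.mem_Ico.2 ⟨h2, h1⟩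
    have hcard := Finset.card_le_card_of_injOn (fun s => s + q - α.val) hinj (by
      intro x hx y hy hxy
      simp only [Finset.mem_coe] at hx hy
      simp only at hxy
      have hxM : x < M := Finset.mem_range.1 (hSsub hx)
      have hyM : y < M := Finset.mem_range.1 (hSsub hy)
      omega)
    rw [Nat.card_Ico] at hcard
    omega

lemma E_full {q : ℕ} (hq : q.Prime) {A B : Finset (ZMod q)} (hA2 : 2 ≤ A.card) (hB2 : 2 ≤ B.card)
    {u : ZMod q} (hsum : A + B = AP u 1 (A.card + B.card - 1))
    (hsmall : A.card + B.card + 1 ≤ q) :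
    (∃ a0, A = AP a0 1 A.card) ∧ (∃ b0, B = AP b0 1 B.card) := by
  have hsum' : B + A = AP u 1 (B.card + A.card - 1) := by
    rw [add_comm B A, hsum]
    congr 1
    omega
  exact ⟨E_half hq hB2 hA2 hsum' (by omega), E_half hq hA2 hB2 hsum hsmall⟩

/-- back-conversion from `ZMod (addOrderOf g)` interval structure to `G` AP structure -/
lemma back {g : G} (hdpos : 0 < addOrderOf g) {S : Finset ℕ} {α : ZMod (addOrderOf g)} {k : ℕ}
    (himg : S.image (Nat.cast : ℕ → ZMod (addOrderOf g)) = AP α 1 k) (base : G) :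
    S.image (fun i => base + i • g) = AP (base + α.val • g) g k := by
  haveI : NeZero (addOrderOf g) := ⟨hdpos.ne'⟩
  have hαu : ((α.val : ℕ) : ZMod (addOrderOf g)) = α := ZMod.natCast_zmod_val α
  ext x
  constructor
  · intro hx
    obtain ⟨i, hiS, rfl⟩ := Finset.mem_image.1 hx
    have h1 : (i : ZMod (addOrderOf g)) ∈ AP α 1 k := by
      rw [← himg]; exact Finset.mem_image_of_mem _ hiS
    obtain ⟨m, hm, hmeq⟩ := mem_AP.1 h1
    have h2 : ((α.val + m : ℕ) : ZMod (addOrderOf g)) = (i : ZMod (addOrderOf g)) := by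
      rw [Nat.cast_add, hαu, ← hmeq, nsmul_eq_mul, mul_one]
    have h3 : (α.val + m) • g = i • g :=
      (nsmul_eq_iff_mod hdpos).2 ((ZMod.natCast_eq_natCast_iff _ _ _).1 h2)
    refine mem_AP.2 ⟨m, hm, ?_⟩
    rw [← h3, add_nsmul]
    abel
  · intro hx
    obtain ⟨m, hm, rfl⟩ := mem_AP.1 hx
    have h1 : α + m • (1 : ZMod (addOrderOf g)) ∈ AP α 1 k := mem_AP.2 ⟨m, hm, rfl⟩
    rw [← himg] at h1
    obtain ⟨i, hiS, hieq⟩ := Finset.mem_image.1 h1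
    have h2 : ((α.val + m : ℕ) : ZMod (addOrderOf g)) = (i : ZMod (addOrderOf g)) := by
      rw [Nat.cast_add, hαu, hieq, nsmul_eq_mul, mul_one]
    have h3 : (α.val + m) • g = i • g :=
      (nsmul_eq_iff_mod hdpos).2 ((ZMod.natCast_eq_natCast_iff _ _ _).1 h2)
    refine Finset.mem_image.2 ⟨i, hiS, ?_⟩
    rw [← h3, add_nsmul]
    abel

/-- the recovery lemma: a critical pair whose sumset is an AP consists of APs -/
lemma R {p : ℕ} (hord : ∀ x : G, x ≠ 0 → p ≤ addOrderOf x)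
    (hfac : ∀ x : G, x ≠ 0 → p ≤ (addOrderOf x).minFac)
    {A B : Finset G} (hA2 : 2 ≤ A.card) (hB2 : 2 ≤ B.card)
    (hsmall : A.card + B.card + 1 ≤ p) {c g : G} (hg : g ≠ 0)
    (hsum : A + B = AP c g (A.card + B.card - 1)) :
    (∃ a0, A = AP a0 g A.card) ∧ (∃ b0, B = AP b0 g B.card) := by
  set N := A.card + B.card - 1 with hN
  have hdp : p ≤ addOrderOf g := hord g hg
  set d := addOrderOf g with hd
  have hdpos : 0 < d := by omega
  obtain ⟨a0, ha0⟩ := Finset.card_pos.1 (show 0 < A.card by omega)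
  obtain ⟨b0, hb0⟩ := Finset.card_pos.1 (show 0 < B.card by omega)
  have hNd : N + 2 ≤ d := by omega
  have hcoordA : ∀ a ∈ A, ∃ i < N, a = (c - b0) + i • g := by
    intro a ha
    have h1 : a + b0 ∈ AP c g N := by rw [← hsum]; exact Finset.add_mem_add ha hb0
    obtain ⟨i, hi, hieq⟩ := mem_AP.1 h1
    refine ⟨i, hi, ?_⟩
    have : a = c + i • g - b0 := by rw [hieq]; abel
    rw [this]; abel
  have hcoordB : ∀ b ∈ B, ∃ j < N, b = (c - a0) + j • g := by
    intro b hb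
    have h1 : a0 + b ∈ AP c g N := by rw [← hsum]; exact Finset.add_mem_add ha0 hb
    obtain ⟨j, hj, hjeq⟩ := mem_AP.1 h1
    refine ⟨j, hj, ?_⟩
    have : b = c + j • g - a0 := by rw [hjeq]; abel
    rw [this]; abel
  set KA := (Finset.range N).filter (fun i => (c - b0) + i • g ∈ A) with hKA
  set KB := (Finset.range N).filter (fun j => (c - a0) + j • g ∈ B) with hKB
  have hAim : A = KA.image (fun i => (c - b0) + i • g) := by
    ext x
    constructor
    · intro hx
      obtain ⟨i, hi, rfl⟩ := hcoordA x hx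
      exact Finset.mem_image_of_mem _ (Finset.mem_filter.2 ⟨Finset.mem_range.2 hi, hx⟩)
    · intro hx
      obtain ⟨i, hi, rfl⟩ := Finset.mem_image.1 hx
      exact (Finset.mem_filter.1 hi).2
  have hBim : B = KB.image (fun j => (c - a0) + j • g) := by
    ext x
    constructor
    · intro hx
      obtain ⟨j, hj, rfl⟩ := hcoordB x hx
      exact Finset.mem_image_of_mem _ (Finset.mem_filter.2 ⟨Finset.mem_range.2 hj, hx⟩)
    · intro hx
      obtain ⟨j, hj, rfl⟩ := Finset.mem_image.1 hx
      exact (Finset.mem_filter.1 hj).2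
  have hKAsub : KA ⊆ Finset.range N := Finset.filter_subset _ _
  have hKBsub : KB ⊆ Finset.range N := Finset.filter_subset _ _
  have hinjbase : ∀ (base : G), Set.InjOn (fun i : ℕ => base + i • g) (Finset.range N) := by
    intro base i hi j hj hij
    simp only [Finset.coe_range, Set.mem_Iio] at hi hj
    exact nsmul_inj (by omega) (by omega) (add_left_cancel hij)
  have hKAcard : KA.card = A.card := by
    rw [hAim, Finset.card_image_of_injOn ((hinjbase (c - b0)).mono (by exact_mod_cast hKAsub))]
  have hKBcard : KB.card = B.card := by
    rw [hBim, Finset.card_image_of_injOn ((hinjbase (c - a0)).mono (by exact_mod_cast hKBsub))]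
  obtain ⟨s0, hs0N, hs0⟩ := mem_AP.1 (show a0 + b0 ∈ AP c g N by
    rw [← hsum]; exact Finset.add_mem_add ha0 hb0)
  -- the smul relation
  have hbase_add : ∀ i j : ℕ, ((c - b0) + i • g) + ((c - a0) + j • g) = c + ((i + j) • g - s0 • g) := by
    intro i j
    have : c + s0 • g = a0 + b0 := hs0
    rw [add_nsmul]
    have h2 : a0 + b0 = c + s0 • g := hs0.symm
    calc ((c - b0) + i • g) + ((c - a0) + j • g) = c + c - (a0 + b0) + (i • g + j • g) := by abel
      _ = c + c - (c + s0 • g) + (i • g + j • g) := by rw [h2]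
      _ = c + (i • g + j • g - s0 • g) := by abel
  have hrel : ∀ i ∈ KA, ∀ j ∈ KB, ∃ l < N, (i + j) • g = (s0 + l) • g := by
    intro i hiKA j hjKB
    have hmem : ((c - b0) + i • g) + ((c - a0) + j • g) ∈ AP c g N := by
      rw [← hsum]
      exact Finset.add_mem_add ((Finset.mem_filter.1 hiKA).2) ((Finset.mem_filter.1 hjKB).2)
    obtain ⟨l, hl, hleq⟩ := mem_AP.1 hmem
    refine ⟨l, hl, ?_⟩
    rw [hbase_add i j] at hleq
    have h3 : l • g = (i + j) • g - s0 • g := add_left_cancel hleq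
    rw [add_nsmul g s0 l, h3]
    abel
  have hrel2 : ∀ l, l < N → ∃ i ∈ KA, ∃ j ∈ KB, (i + j) • g = (s0 + l) • g := by
    intro l hl
    have hmem : c + l • g ∈ A + B := by rw [hsum]; exact mem_AP.2 ⟨l, hl, rfl⟩
    obtain ⟨a, ha, b, hb, habeq⟩ := Finset.mem_add.1 hmem
    obtain ⟨i, hi, hieq⟩ := hcoordA a ha
    obtain ⟨j, hj, hjeq⟩ := hcoordB b hb
    refine ⟨i, Finset.mem_filter.2 ⟨Finset.mem_range.2 hi, hieq ▸ ha⟩,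
            j, Finset.mem_filter.2 ⟨Finset.mem_range.2 hj, hjeq ▸ hb⟩, ?_⟩
    rw [hieq, hjeq, hbase_add i j] at habeq
    have h3 : (i + j) • g - s0 • g = l • g := add_left_cancel habeq
    rw [add_nsmul g s0 l, ← h3]
    abel
  -- the key step in ZMod q
  have key : ∀ q : ℕ, q.Prime → N + 2 ≤ q →
      (∀ i ∈ KA, ∀ j ∈ KB, ∀ l, l < N → (i + j) • g = (s0 + l) • g → (i + j) ≡ (s0 + l) [MOD q]) →
      (∃ α : ZMod q, KA.image (Nat.cast : ℕ → ZMod q) = AP α 1 A.card) ∧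
      (∃ β : ZMod q, KB.image (Nat.cast : ℕ → ZMod q) = AP β 1 B.card) := by
    intro q hq hNq hcong
    haveI : NeZero q := ⟨hq.ne_zero⟩
    have hcastinj : Set.InjOn (Nat.cast : ℕ → ZMod q) (Finset.range N) := by
      intro i hi j hj hij
      simp only [Finset.coe_range, Set.mem_Iio] at hi hj
      have h1 : ((i : ℕ) : ZMod q).val = i := ZMod.val_cast_of_lt (by omega)
      have h2 : ((j : ℕ) : ZMod q).val = j := ZMod.val_cast_of_lt (by omega)
      rw [← h1, ← h2, hij]
    have hZAcard : (KA.image (Nat.cast : ℕ → ZMod q)).card = A.card := by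
      rw [Finset.card_image_of_injOn (hcastinj.mono (by exact_mod_cast hKAsub)), hKAcard]
    have hZBcard : (KB.image (Nat.cast : ℕ → ZMod q)).card = B.card := by
      rw [Finset.card_image_of_injOn (hcastinj.mono (by exact_mod_cast hKBsub)), hKBcard]
    have hZsum : KA.image (Nat.cast : ℕ → ZMod q) + KB.image (Nat.cast : ℕ → ZMod q)
        = AP ((s0 : ZMod q)) 1 N := by
      ext x
      constructor
      · intro hx
        obtain ⟨y, hy, z, hz, rfl⟩ := Finset.mem_add.1 hx
        obtain ⟨i, hiKA, rfl⟩ := Finset.mem_image.1 hy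
        obtain ⟨j, hjKB, rfl⟩ := Finset.mem_image.1 hz
        obtain ⟨l, hl, hleq⟩ := hrel i hiKA j hjKB
        have hc := hcong i hiKA j hjKB l hl hleq
        refine mem_AP.2 ⟨l, hl, ?_⟩
        have : ((s0 + l : ℕ) : ZMod q) = ((i + j : ℕ) : ZMod q) :=
          (ZMod.natCast_eq_natCast_iff _ _ _).2 hc.symm
        push_cast at this
        rw [nsmul_eq_mul, mul_one]
        rw [this]
      · intro hx
        obtain ⟨l, hl, hleq⟩ := mem_AP.1 hx
        obtain ⟨i, hiKA, j, hjKB, heq⟩ := hrel2 l hl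
        have hc := hcong i hiKA j hjKB l hl heq
        refine Finset.mem_add.2 ⟨(i : ZMod q), Finset.mem_image_of_mem _ hiKA,
          (j : ZMod q), Finset.mem_image_of_mem _ hjKB, ?_⟩
        have : ((s0 + l : ℕ) : ZMod q) = ((i + j : ℕ) : ZMod q) :=
          (ZMod.natCast_eq_natCast_iff _ _ _).2 hc.symm
        push_cast at this
        rw [← hleq, nsmul_eq_mul, mul_one]
        rw [this]
    have hNcards : N = (KA.image (Nat.cast : ℕ → ZMod q)).card
        + (KB.image (Nat.cast : ℕ → ZMod q)).card - 1 := by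
      rw [hZAcard, hZBcard]
    obtain ⟨hA', hB'⟩ := E_full hq (A := KA.image (Nat.cast : ℕ → ZMod q))
      (B := KB.image (Nat.cast : ℕ → ZMod q)) (by omega) (by omega)
      (by rw [hZsum, ← hNcards]) (by omega)
    rw [hZAcard] at hA'
    rw [hZBcard] at hB'
    exact ⟨hA', hB'⟩
  by_cases hdprime : d.Prime
  · -- prime case: q = d
    obtain ⟨⟨α, hZA⟩, ⟨β, hZB⟩⟩ := key d hdprime (by omega) (by
      intro i _ j _ l _ hleq
      exact (nsmul_eq_iff_mod hdpos).1 hleq)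
    constructor
    · refine ⟨(c - b0) + α.val • g, ?_⟩
      nth_rewrite 1 [hAim]
      exact back hdpos hZA (c - b0)
    · refine ⟨(c - a0) + β.val • g, ?_⟩
      nth_rewrite 1 [hBim]
      exact back hdpos hZB (c - a0)
  · -- composite case: d ≥ 2N+3, use auxiliary prime
    have hd2N : 2*N + 3 ≤ d := by
      have h1 := Nat.minFac_sq_le_self hdpos hdprime
      have h2 : p ≤ d.minFac := hfac g hg
      have h3 : (N + 2)^2 ≤ d.minFac^2 := Nat.pow_le_pow_left (by omega) 2
      have h4 : (N + 2)^2 = N*N + 4*N + 4 := by ring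
      have h5 : d.minFac^2 ≤ d := h1
      nlinarith
    obtain ⟨q', hq'big, hq'prime⟩ := Nat.exists_infinite_primes (2*N + 3)
    have hexact : ∀ i ∈ KA, ∀ j ∈ KB, ∀ l, l < N → (i + j) • g = (s0 + l) • g
        → (i + j) = (s0 + l) := by
      intro i hiKA j hjKB l hl hleq
      have h1 := (nsmul_eq_iff_mod hdpos).1 hleq
      have hiN : i < N := Finset.mem_range.1 (hKAsub hiKA)
      have hjN : j < N := Finset.mem_range.1 (hKBsub hjKB)
      exact modeq_eq_of_lt h1 (by omega) (by omega)
    obtain ⟨⟨α, hZA⟩, ⟨β, hZB⟩⟩ := key q' hq'prime (by omega) (by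
      intro i hiKA j hjKB l hl hleq
      rw [hexact i hiKA j hjKB l hl hleq])
    constructor
    · obtain ⟨sA, hsA⟩ := unsplit hq'prime (M := N) (by omega) hKAsub (by rw [hKAcard, hZA])
      refine ⟨(c - b0) + sA • g, ?_⟩
      nth_rewrite 1 [hAim]
      rw [hsA, hKAcard, Finset.image_image]
      show _ = (Finset.range A.card).image (fun i => ((c - b0) + sA • g) + i • g)
      apply Finset.image_congr
      intro i _
      simp only [Function.comp_apply]
      rw [add_nsmul]
      abel
    · obtain ⟨sB, hsB⟩ := unsplit hq'prime (M := N) (by omega) hKBsub (by rw [hKBcard, hZB])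
      refine ⟨(c - a0) + sB • g, ?_⟩
      nth_rewrite 1 [hBim]
      rw [hsB, hKBcard, Finset.image_image]
      show _ = (Finset.range B.card).image (fun j => ((c - a0) + sB • g) + j • g)
      apply Finset.image_congr
      intro j _
      simp only [Function.comp_apply]
      rw [add_nsmul]
      abel

/-- the main induction: critical pairs are arithmetic progressions -/
lemma W {p : ℕ} (hp : 2 ≤ p) (hord : ∀ x : G, x ≠ 0 → p ≤ addOrderOf x)
    (hfac : ∀ x : G, x ≠ 0 → p ≤ (addOrderOf x).minFac) :
    ∀ n : ℕ, ∀ A B : Finset G, B.card ≤ n → 2 ≤ B.card → B.card ≤ A.card →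
    A.card + B.card + 1 ≤ p → (A + B).card + 1 = A.card + B.card →
    ∃ g, g ≠ (0:G) ∧ (∃ a, A = AP a g A.card) ∧ (∃ b, B = AP b g B.card) := by
  intro n
  induction n with
  | zero => intro A B h1 h2 _ _ _; omega
  | succ n ih =>
    intro A B hBn hB2 hBA hsmall hcrit
    have hAne : A.Nonempty := Finset.card_pos.1 (by omega)
    have hBne : B.Nonempty := Finset.card_pos.1 (by omega)
    have hABlt : (A + B).card < p := by omega
    by_cases hBcase : B.card = 2
    · -- base case |B| = 2
      obtain ⟨b1, b2, hb12, hBeq⟩ := Finset.card_eq_two.1 hBcase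
      have hg : b2 - b1 ≠ 0 := sub_ne_zero.2 (Ne.symm hb12)
      have hBAP : B = AP b1 (b2 - b1) 2 := by
        rw [AP_pair, hBeq]
        congr 2
        abel
      have hcrit2 : (A + AP b1 (b2 - b1) 2).card + 1 = A.card + 2 := by
        rw [← hBAP]
        omega
      obtain ⟨a, hA⟩ := seg_con hord hAne hg le_rfl (by rw [← hBAP]; omega) hcrit2
      exact ⟨b2 - b1, hg, ⟨a, hA⟩, ⟨b1, by rw [hBcase]; exact hBAP⟩⟩
    · have hB3 : 3 ≤ B.card := by omega
      by_cases hgood : ∃ e : G, 2 ≤ (B.filter (fun b => b + e ∈ A)).card ∧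
          (B.filter (fun b => b + e ∈ A)).card < B.card
      · -- transform case
        obtain ⟨e, hB'2, hB'lt⟩ := hgood
        set B' := B.filter (fun b => b + e ∈ A) with hB'
        set A' := A ∪ B.image (· + e) with hA'
        have hB'sub : B' ⊆ B := Finset.filter_subset _ _
        have hsub : A' + B' ⊆ A + B := by
          intro x hx
          obtain ⟨y, hy, z, hz, rfl⟩ := Finset.mem_add.1 hx
          obtain ⟨hzB, hzA⟩ := Finset.mem_filter.1 hz
          rcases Finset.mem_union.1 hy with hyA | hyim
          · exact Finset.add_mem_add hyA hzB
          · obtain ⟨b, hb, rfl⟩ := Finset.mem_image.1 hyim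
            have : (z + e) + b = b + e + z := by abel
            rw [← this]
            exact Finset.add_mem_add hzA hb
        have himcard : (B.image (· + e)).card = B.card :=
          Finset.card_image_of_injective _ (add_left_injective e)
        have hintercard : (A ∩ B.image (· + e)).card = B'.card := by
          have h1 : B'.image (· + e) = A ∩ B.image (· + e) := by
            ext x
            constructor
            · intro hx
              obtain ⟨b, hb, rfl⟩ := Finset.mem_image.1 hx
              obtain ⟨hbB, hbA⟩ := Finset.mem_filter.1 hb
              exact Finset.mem_inter.2 ⟨hbA, Finset.mem_image_of_mem _ hbB⟩
            · intro hx
              obtain ⟨hxA, hxim⟩ := Finset.mem_inter.1 hx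
              obtain ⟨b, hb, rfl⟩ := Finset.mem_image.1 hxim
              exact Finset.mem_image_of_mem _ (Finset.mem_filter.2 ⟨hb, hxA⟩)
          rw [← h1, Finset.card_image_of_injective _ (add_left_injective e)]
        have hcards : A'.card + B'.card = A.card + B.card := by
          have h2 := Finset.card_union_add_card_inter A (B.image (· + e))
          rw [himcard, hintercard, ← hA'] at h2
          have hB'B : B'.card ≤ B.card := Finset.card_le_card hB'sub
          omega
        have hA'ne : A'.Nonempty := hAne.mono Finset.subset_union_left
        have hB'ne : B'.Nonempty := Finset.card_pos.1 (by omega)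
        have hup : (A' + B').card ≤ (A + B).card := Finset.card_le_card hsub
        have hcd := cd hord hA'ne hB'ne (by omega)
        have hcrit' : (A' + B').card + 1 = A'.card + B'.card := by omega
        have hsumeq : A' + B' = A + B :=
          Finset.eq_of_subset_of_card_le hsub (by omega)
        obtain ⟨g, hg, ⟨a', hA'eq⟩, ⟨b', hB'eq⟩⟩ := ih A' B'
          (by
            have : B'.card < B.card := hB'lt
            omega)
          hB'2
          (by
            have h3 : A.card ≤ A'.card := Finset.card_le_card Finset.subset_union_left
            have : B'.card ≤ B.card := Finset.card_le_card hB'sub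
            omega)
          (by omega) hcrit'
        have hsum' : A + B = AP (a' + b') g (A.card + B.card - 1) := by
          have h1 : A' + B' = AP a' g A'.card + AP b' g B'.card := by
            rw [← hA'eq, ← hB'eq]
          rw [← hsumeq, h1, AP_add_AP (by omega) (by omega)]
          congr 1
          omega
        obtain ⟨hAAP, hBAP⟩ := R hord hfac (by omega) (by omega) hsmall hg hsum'
        exact ⟨g, hg, hAAP, hBAP⟩
      · -- stuck case
        push_neg at hgood
        have hdich : ∀ a ∈ A, ∀ b0 ∈ B,
            (∀ b ∈ B, a + b - b0 ∈ A) ∨ (∀ b ∈ B, b ≠ b0 → a + b - b0 ∉ A) := by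
          intro a ha b0 hb0
          set e := a - b0 with he
          have hb0mem : b0 ∈ B.filter (fun b => b + e ∈ A) := by
            refine Finset.mem_filter.2 ⟨hb0, ?_⟩
            have : b0 + (a - b0) = a := by abel
            rw [this]
            exact ha
          have h1 : 1 ≤ (B.filter (fun b => b + e ∈ A)).card :=
            Finset.card_pos.2 ⟨b0, hb0mem⟩
          have h2 : (B.filter (fun b => b + e ∈ A)).card ≤ B.card :=
            Finset.card_le_card (Finset.filter_subset _ _)
          have h3 := hgood e
          rcases (by omega : (B.filter (fun b => b + e ∈ A)).card = 1 ∨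
              (B.filter (fun b => b + e ∈ A)).card = B.card) with hc1 | hcb
          · right
            intro b hb hbne hmem
            obtain ⟨x, hx⟩ := Finset.card_eq_one.1 hc1
            have hbmem : b ∈ B.filter (fun b => b + e ∈ A) := by
              refine Finset.mem_filter.2 ⟨hb, ?_⟩
              have : b + (a - b0) = a + b - b0 := by abel
              rw [this]
              exact hmem
            rw [hx] at hbmem hb0mem
            rw [Finset.mem_singleton] at hbmem hb0mem
            exact hbne (hbmem.trans hb0mem.symm)
          · left
            intro b hb
            have hfull : B.filter (fun b => b + e ∈ A) = B :=
              Finset.eq_of_subset_of_card_le (Finset.filter_subset _ _) (le_of_eq hcb.symm)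
            have : b ∈ B.filter (fun b => b + e ∈ A) := hfull.symm ▸ hb
            have h4 := (Finset.mem_filter.1 this).2
            have h5 : b + (a - b0) = a + b - b0 := by abel
            rwa [h5] at h4
        by_cases hQ : ∃ b0 ∈ B, ∃ a ∈ A, ∀ b ∈ B, a + b - b0 ∈ A
        · -- some full translate exists
          obtain ⟨b0, hb0, afull, hafullA, hafull⟩ := hQ
          set F := A.filter (fun a => ∀ b ∈ B, a + b - b0 ∈ A) with hF
          have hFsub : F ⊆ A := Finset.filter_subset _ _
          have hFne : F.Nonempty := ⟨afull, Finset.mem_filter.2 ⟨hafullA, hafull⟩⟩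
          have hFneA : F ≠ A := by
            intro heq
            have hABsub : A + B ⊆ A.image (· + b0) := by
              intro x hx
              obtain ⟨a, ha, b, hb, rfl⟩ := Finset.mem_add.1 hx
              have haF : a ∈ F := heq.symm ▸ ha
              have h4 := (Finset.mem_filter.1 haF).2 b hb
              exact Finset.mem_image.2 ⟨a + b - b0, h4, by abel⟩
            have h5 := Finset.card_le_card hABsub
            have h6 : (A.image (· + b0)).card = A.card :=
              Finset.card_image_of_injective _ (add_left_injective b0)
            omega
          have hb0im : A.image (· + b0) ⊆ A + B := by
            intro x hx
            obtain ⟨a, ha, rfl⟩ := Finset.mem_image.1 hx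
            exact Finset.add_mem_add ha hb0
          have hEcard : ((A + B) \ A.image (· + b0)).card = B.card - 1 := by
            rw [Finset.card_sdiff_of_subset hb0im,
              Finset.card_image_of_injective _ (add_left_injective b0)]
            omega
          have hkey : ∀ a ∈ A, a ∉ F → (B.erase b0).image (fun b => a + b)
              = (A + B) \ A.image (· + b0) := by
            intro a ha haF
            have hnotfull : ∀ b ∈ B, b ≠ b0 → a + b - b0 ∉ A := by
              rcases hdich a ha b0 hb0 with hfull | hr
              · exact absurd (Finset.mem_filter.2 ⟨ha, hfull⟩) haF
              · exact hr
            apply Finset.eq_of_subset_of_card_le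
            · intro x hx
              obtain ⟨b, hb, rfl⟩ := Finset.mem_image.1 hx
              have hbB : b ∈ B := Finset.mem_of_mem_erase hb
              have hbne : b ≠ b0 := Finset.ne_of_mem_erase hb
              refine Finset.mem_sdiff.2 ⟨Finset.add_mem_add ha hbB, ?_⟩
              intro hmem
              obtain ⟨a'', ha'', heq⟩ := Finset.mem_image.1 hmem
              have : a'' = a + b - b0 := by rw [← heq]; abel
              exact hnotfull b hbB hbne (this ▸ ha'')
            · rw [hEcard, Finset.card_image_of_injective _ (add_right_injective a),
                Finset.card_erase_of_mem hb0]
          have hsd : (A \ F).Nonempty := by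
            rw [Finset.sdiff_nonempty]
            intro hsub
            exact hFneA (Finset.Subset.antisymm hFsub hsub)
          have hsdcard : (A \ F).card = 1 := by
            by_contra hc
            have h2c : 2 ≤ (A \ F).card := by
              have := Finset.card_pos.2 hsd
              omega
            obtain ⟨a1, ha1, a2, ha2, hne12⟩ := Finset.one_lt_card.1 h2c
            have ha1A : a1 ∈ A := (Finset.mem_sdiff.1 ha1).1
            have ha2A : a2 ∈ A := (Finset.mem_sdiff.1 ha2).1
            have himeq : (B.erase b0).image (fun b => a1 + b)
                = (B.erase b0).image (fun b => a2 + b) := by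
              rw [hkey a1 ha1A (Finset.mem_sdiff.1 ha1).2, hkey a2 ha2A (Finset.mem_sdiff.1 ha2).2]
            have hYne : (B.erase b0).Nonempty :=
              Finset.card_pos.1 (by rw [Finset.card_erase_of_mem hb0]; omega)
            have hclosed : ∀ y ∈ B.erase b0, y + (a1 - a2) ∈ B.erase b0 := by
              intro y hy
              have h7 : a1 + y ∈ (B.erase b0).image (fun b => a2 + b) := by
                rw [← himeq]
                exact Finset.mem_image_of_mem _ hy
              obtain ⟨y', hy', heq⟩ := Finset.mem_image.1 h7
              have : y + (a1 - a2) = y' := by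
                have : a1 + y - a2 = y' := by rw [← heq]; abel
                rw [← this]; abel
              rw [this]
              exact hy'
            have hδ : a1 - a2 ≠ 0 := sub_ne_zero.2 hne12
            have h7 : p ≤ addOrderOf (a1 - a2) := hord _ hδ
            have h6 := orbit_card hYne (by omega) hclosed
            have h8 : (B.erase b0).card = B.card - 1 := Finset.card_erase_of_mem hb0
            omega
          obtain ⟨a1, ha1⟩ := Finset.card_eq_one.1 hsdcard
          have hAF : ∀ a ∈ A, a ≠ a1 → a ∈ F := by
            intro a ha hne
            by_contra haF
            have h9 : a ∈ A \ F := Finset.mem_sdiff.2 ⟨ha, haF⟩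
            rw [ha1, Finset.mem_singleton] at h9
            exact hne h9
          have hYne2 : (B.erase b0).Nonempty :=
            Finset.card_pos.1 (by rw [Finset.card_erase_of_mem hb0]; omega)
          obtain ⟨be, hbe⟩ := hYne2
          have hbeB : be ∈ B := Finset.mem_of_mem_erase hbe
          have hbene : be ≠ b0 := Finset.ne_of_mem_erase hbe
          have hddne : be - b0 ≠ 0 := sub_ne_zero.2 hbene
          have hsubun : A ∪ A.image (· + (be - b0)) ⊆ A ∪ {a1 + (be - b0)} := by
            intro x hx
            rcases Finset.mem_union.1 hx with h | h
            · exact Finset.mem_union_left _ h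
            · obtain ⟨a, ha, rfl⟩ := Finset.mem_image.1 h
              by_cases hcase : a = a1
              · subst hcase
                exact Finset.mem_union_right _ (Finset.mem_singleton_self _)
              · have haFm : a ∈ F := hAF a ha hcase
                have h10 := (Finset.mem_filter.1 haFm).2 be hbeB
                have heq : a + (be - b0) = a + be - b0 := by abel
                rw [heq]
                exact Finset.mem_union_left _ h10
          have hcardun : (A ∪ A.image (· + (be - b0))).card ≤ A.card + 1 := by
            refine le_trans (Finset.card_le_card hsubun) (le_trans (Finset.card_union_le _ _) ?_)
            simp
          have hordd : A.card < addOrderOf (be - b0) := by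
            have := hord _ hddne
            omega
          obtain ⟨astar, hAast⟩ := con hAne hordd hcardun
          have hBAcomm : B + A = A + B := add_comm B A
          have hcritB : (B + AP astar (be - b0) A.card).card + 1 = B.card + A.card := by
            rw [← hAast, hBAcomm]
            omega
          obtain ⟨bstar, hBast⟩ := seg_con hord hBne hddne (show 2 ≤ A.card by omega)
            (by rw [← hAast, hBAcomm]; omega) hcritB
          exact ⟨be - b0, hddne, ⟨astar, hAast⟩, ⟨bstar, hBast⟩⟩
        · -- no full translate: translates pairwise disjoint, contradiction
          push_neg at hQ
          have hsep : ∀ a ∈ A, ∀ b0 ∈ B, ∀ b ∈ B, b ≠ b0 → a + b - b0 ∉ A := by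
            intro a ha b0 hb0
            rcases hdich a ha b0 hb0 with hfull | hr
            · obtain ⟨b, hb, hnot⟩ := hQ b0 hb0 a ha
              exact absurd (hfull b hb) hnot
            · exact hr
          have hdisj : ∀ x ∈ B, ∀ y ∈ B, x ≠ y →
              Disjoint (A.image (· + x)) (A.image (· + y)) := by
            intro x hx y hy hxy
            rw [Finset.disjoint_left]
            intro z hzx hzy
            obtain ⟨a, ha, rfl⟩ := Finset.mem_image.1 hzx
            obtain ⟨a', ha', heq⟩ := Finset.mem_image.1 hzy
            have h11 : a' = a + x - y := by rw [← heq]; abel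
            exact hsep a ha y hy x hx hxy (h11 ▸ ha')
          have hunion : A + B = B.biUnion (fun b => A.image (· + b)) := by
            ext z
            simp only [Finset.mem_add, Finset.mem_biUnion, Finset.mem_image]
            constructor
            · rintro ⟨a, ha, b, hb, rfl⟩
              exact ⟨b, hb, a, ha, rfl⟩
            · rintro ⟨b, hb, a, ha, rfl⟩
              exact ⟨a, ha, b, hb, rfl⟩
          have hcardAB : (A + B).card = B.card * A.card := by
            rw [hunion, Finset.card_biUnion hdisj]
            rw [Finset.sum_congr rfl (fun b _ =>
              Finset.card_image_of_injective A (add_left_injective b))]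
            rw [Finset.sum_const, smul_eq_mul]
          nlinarith [hcrit, hcardAB, hB3, hBA]

lemma foldSum_one (A : Finset G) : foldSum 1 A = A := by
  ext x
  simp only [foldSum, Finset.mem_image, Fintype.mem_piFinset]
  constructor
  · rintro ⟨f, hf, rfl⟩
    rw [Fin.sum_univ_one]
    exact hf 0
  · intro hx
    exact ⟨fun _ => x, fun _ => hx, Fin.sum_univ_one _⟩

lemma foldSum_succ (h : ℕ) (A : Finset G) : foldSum (h+1) A = foldSum h A + A := by
  ext x
  simp only [foldSum, Finset.mem_image, Fintype.mem_piFinset, Finset.mem_add]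
  constructor
  · rintro ⟨f, hf, rfl⟩
    exact ⟨∑ i : Fin h, f i.castSucc, ⟨f ∘ Fin.castSucc, fun i => hf _, rfl⟩, f (Fin.last h),
      hf _, (Fin.sum_univ_castSucc f).symm⟩
  · rintro ⟨y, ⟨f, hf, rfl⟩, a, ha, rfl⟩
    refine ⟨Fin.snoc f a, ?_, ?_⟩
    · intro i
      refine Fin.lastCases ?_ ?_ i
      · rw [Fin.snoc_last]; exact ha
      · intro j
        rw [Fin.snoc_castSucc]
        exact hf j
    · rw [Fin.sum_univ_castSucc]
      simp [Fin.snoc_castSucc, Fin.snoc_last]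

lemma foldSum_nonempty {A : Finset G} (hA : A.Nonempty) (h : ℕ) : (foldSum h A).Nonempty := by
  apply Finset.Nonempty.image
  rw [Fintype.piFinset_nonempty]
  exact fun _ => hA

lemma foldSum_card_le {A : Finset G} (hA : A.Nonempty) (h : ℕ) :
    (foldSum h A).card ≤ (foldSum (h+1) A).card := by
  obtain ⟨a, ha⟩ := hA
  have hsub : (foldSum h A).image (· + a) ⊆ foldSum (h+1) A := by
    intro x hx
    obtain ⟨y, hy, rfl⟩ := Finset.mem_image.1 hx
    rw [foldSum_succ]
    exact Finset.add_mem_add hy ha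
  calc (foldSum h A).card = ((foldSum h A).image (· + a)).card :=
        (Finset.card_image_of_injective _ (add_left_injective a)).symm
    _ ≤ _ := Finset.card_le_card hsub

lemma foldSum_card_mono {A : Finset G} (hA : A.Nonempty) {k l : ℕ} (hkl : k ≤ l) :
    (foldSum k A).card ≤ (foldSum l A).card := by
  induction l with
  | zero =>
    have : k = 0 := by omega
    rw [this]
  | succ l ihl =>
    rcases Nat.lt_or_ge k (l+1) with hlt | hge
    · exact le_trans (ihl (by omega)) (foldSum_card_le hA l)
    · have : k = l + 1 := by omega
      rw [this]

lemma foldSum_AP {a g : G} {m : ℕ} (hm : 1 ≤ m) :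
    ∀ h : ℕ, 1 ≤ h → foldSum h (AP a g m) = AP (h • a) g (h*(m-1)+1) := by
  intro h
  induction h with
  | zero => omega
  | succ h ihh =>
    intro _
    rcases Nat.eq_zero_or_pos h with h1 | h2
    · subst h1
      rw [foldSum_one]
      have h3 : (0 + 1) • a = a := by rw [zero_add, one_smul]
      rw [h3]
      congr 1
      omega
    · have hh1 : 1 ≤ h := by omega
      rw [foldSum_succ, ihh hh1, AP_add_AP (by omega) (by omega : 0 < m)]
      rw [succ_nsmul]
      congr 1
      have : (h+1)*(m-1) = h*(m-1) + (m-1) := by rw [Nat.succ_mul]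
      omega

end Stmt1


open Stmt1 in
theorem stmt1 (G : Type*) [AddCommGroup G] [Fintype G] [DecidableEq G]
    (n m h p : ℕ) (hn : Fintype.card G = n)
    (hp : p.Prime) (hpn : p ∣ n) (hpmin : ∀ q : ℕ, q.Prime → q ∣ n → p ≤ q)
    (hh : 2 ≤ h) (hm : 1 ≤ m) (hineq : h * m - h + 1 < p)
    (A : Finset G) (hA : A.card = m) :
    (foldSum h A).card = h * m - h + 1 ↔
      ∃ a g : G, A = (Finset.range m).image fun i => a + i • g := by
  have hfacG : ∀ x : G, x ≠ 0 → p ≤ (addOrderOf x).minFac := by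
    intro x hx
    have h1 : addOrderOf x ∣ n := hn ▸ addOrderOf_dvd_card
    have h2 : addOrderOf x ≠ 1 := fun hc => hx (AddMonoid.addOrderOf_eq_one_iff.1 hc)
    exact hpmin _ (Nat.minFac_prime h2) (dvd_trans (Nat.minFac_dvd _) h1)
  have hordG : ∀ x : G, x ≠ 0 → p ≤ addOrderOf x := by
    intro x hx
    exact le_trans (hfacG x hx) (Nat.minFac_le (addOrderOf_pos x))
  have hmn : h * m - h + 1 = h * (m-1) + 1 := by
    obtain ⟨m', rfl⟩ : ∃ m', m = m' + 1 := ⟨m - 1, by omega⟩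
    have e1 : h * (m' + 1) = h * m' + h := Nat.mul_succ h m'
    have e2 : (m' + 1) - 1 = m' := rfl
    rw [e2, e1]
    omega
  rw [hmn] at hineq
  constructor
  · intro hcard
    rcases (by omega : m = 1 ∨ m = 2 ∨ 3 ≤ m) with hm1 | hm2 | hm3
    · subst hm1
      obtain ⟨a, hAa⟩ := Finset.card_eq_one.1 hA
      refine ⟨a, 0, ?_⟩
      rw [hAa]
      ext z
      simp
    · subst hm2
      obtain ⟨x, y, hxy, hAxy⟩ := Finset.card_eq_two.1 hA
      refine ⟨x, y - x, ?_⟩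
      rw [hAxy]
      ext z
      simp only [Finset.mem_insert, Finset.mem_singleton, Finset.mem_image, Finset.mem_range]
      constructor
      · rintro (rfl | rfl)
        · exact ⟨0, by omega, by simp⟩
        · exact ⟨1, by omega, by rw [one_smul]; abel⟩
      · rintro ⟨i, hi, rfl⟩
        interval_cases i
        · left; simp
        · right; rw [one_smul]; abel
    · have hAne : A.Nonempty := Finset.card_pos.1 (by omega)
      rw [hmn] at hcard
      have hlow : ∀ j, (foldSum (2+j) A).card < p →
          (foldSum 2 A).card + j*(m-1) ≤ (foldSum (2+j) A).card := by
        intro j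
        induction j with
        | zero => intro _; simp
        | succ j ihj =>
          intro hlt
          have heq : foldSum (2+(j+1)) A = foldSum (2+j) A + A := by
            rw [show 2+(j+1) = (2+j)+1 from rfl, foldSum_succ]
          have hmono1 : (foldSum (2+j) A).card ≤ (foldSum (2+(j+1)) A).card := by
            rw [show 2+(j+1) = (2+j)+1 from rfl]
            exact foldSum_card_le hAne _
          have hcd := cd hordG (foldSum_nonempty hAne (2+j)) hAne (by rw [← heq]; omega)
          have hih := ihj (by omega)
          have harith : (j+1)*(m-1) = j*(m-1) + (m-1) := Nat.succ_mul j (m-1)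
          rw [heq]
          omega
      have hhj : 2 + (h - 2) = h := by omega
      have hlt_h : (foldSum (2+(h-2)) A).card < p := by rw [hhj, hcard]; omega
      have h1 := hlow (h-2) hlt_h
      rw [hhj, hcard] at h1
      have hmono2 : (foldSum 2 A).card ≤ h*(m-1)+1 := by
        rw [← hcard]
        exact foldSum_card_mono hAne (by omega)
      have hAA : foldSum 2 A = A + A := by
        rw [show (2:ℕ) = 1+1 from rfl, foldSum_succ, foldSum_one]
      have hcdAA := cd hordG hAne hAne (by rw [← hAA]; omega)
      have harith2 : h*(m-1) = (h-2)*(m-1) + 2*(m-1) := by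
        obtain ⟨h2, rfl⟩ : ∃ h2, h = h2 + 2 := ⟨h-2, by omega⟩
        rw [Nat.add_mul, Nat.add_sub_cancel]
      have hdf : (foldSum 2 A).card = (A + A).card := by rw [hAA]
      have hc2 : (A + A).card = 2*m - 1 := by omega
      have hple : 2*m + 1 ≤ p := by
        have e1 : 2*(m-1) ≤ h*(m-1) := Nat.mul_le_mul_right (m-1) hh
        have e3 : 2*m ≤ p := by omega
        have hne2m : p ≠ 2*m := by
          intro hc
          rcases (hp.eq_one_or_self_of_dvd 2 ⟨m, hc⟩) with h' | h' <;> omega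
        omega
      obtain ⟨g, hg, ⟨a, hAap⟩, -⟩ := W hp.two_le hordG hfacG A.card A A le_rfl (by omega)
        le_rfl (by omega) (by omega)
      rw [hA] at hAap
      exact ⟨a, g, hAap⟩
  · rintro ⟨a, g, hAeq⟩
    have hAP : A = AP a g m := hAeq
    rw [hmn]
    rcases Nat.lt_or_ge m 2 with hm1 | hm2
    · have hm1' : m = 1 := by omega
      subst hm1'
      rw [hAP, foldSum_AP (by omega) h (by omega), AP_card (by
        have := addOrderOf_pos g
        omega)]
    · have hgne : g ≠ 0 := by
        intro hc
        subst hc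
        have hsub : A ⊆ {a} := by
          intro x hx
          rw [hAP] at hx
          obtain ⟨i, _, rfl⟩ := mem_AP.1 hx
          simp
        have := Finset.card_le_card hsub
        rw [hA] at this
        simp at this
        omega
      have hordg := hordG g hgne
      rw [hAP, foldSum_AP (by omega) h (by omega), AP_card (by omega)]
end

section
/- For every integer h ≥ 3 and every positive integer C, there exist a finite abelian group G and an integer m with h + 2 ≤ m ≤ |G| such that ρ(G,m,h) − ρ̂(G,m,h) ≥ C. -/
/-- `ρ(G,m,h)`: the minimum size of the `h`-fold sumset over all `m`-subsets of `G`. -/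
noncomputable def rho (G : Type*) [AddCommGroup G] [DecidableEq G] (m h : ℕ) : ℕ :=
  sInf {k | ∃ A : Finset G, A.card = m ∧ (foldSum h A).card = k}

/-- The `h`-fold restricted sumset of a finite subset `A` of an abelian group:
all sums of `h` pairwise distinct elements of `A`. -/
def restSum {G : Type*} [AddCommGroup G] [DecidableEq G] (h : ℕ) (A : Finset G) : Finset G :=
  (A.powersetCard h).image fun B => ∑ x ∈ B, x

/-- `ρ̂(G,m,h)`: the minimum size of the `h`-fold restricted sumset over all
`m`-subsets of `G`. -/
noncomputable def rhoHat (G : Type*) [AddCommGroup G] [DecidableEq G] (m h : ℕ) : ℕ :=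
  sInf {k | ∃ A : Finset G, A.card = m ∧ (restSum h A).card = k}

open Finset Pointwise

section Aux

variable {G : Type*} [AddCommGroup G] [DecidableEq G]

/-- Iterated pointwise sumset. -/
def iterSum : ℕ → Finset G → Finset G
  | 0, _ => {0}
  | k + 1, A => A + iterSum k A

lemma foldSum_eq_iterSum (h : ℕ) (A : Finset G) : foldSum h A = iterSum h A := by
  induction h with
  | zero =>
    ext x
    simp only [foldSum, mem_image, Fintype.mem_piFinset, iterSum, mem_singleton]
    constructor
    · rintro ⟨f, -, rfl⟩; simp
    · rintro rfl; exact ⟨fun i => i.elim0, fun i => i.elim0, by simp⟩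
  | succ n ih =>
    ext x
    simp only [foldSum, mem_image, Fintype.mem_piFinset, iterSum, ← ih, Finset.mem_add]
    constructor
    · rintro ⟨f, hf, rfl⟩
      refine ⟨f 0, hf 0, ∑ i : Fin n, f i.succ, ⟨fun i => f i.succ, fun i => hf _, rfl⟩, ?_⟩
      rw [Fin.sum_univ_succ]
    · rintro ⟨a, ha, s, ⟨g, hg, rfl⟩, rfl⟩
      refine ⟨Fin.cons a g, ?_, ?_⟩
      · intro i
        induction i using Fin.cases with
        | zero => simpa using ha
        | succ j => simpa using hg j
      · rw [Fin.sum_cons]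

lemma iterSum_nonempty {A : Finset G} (hA : A.Nonempty) (k : ℕ) : (iterSum k A).Nonempty := by
  induction k with
  | zero => exact ⟨0, by simp [iterSum]⟩
  | succ n ih => exact hA.add ih

lemma iterSum_mono {A B : Finset G} (hAB : A ⊆ B) (k : ℕ) : iterSum k A ⊆ iterSum k B := by
  induction k with
  | zero => exact subset_rfl
  | succ n ih => exact Finset.add_subset_add hAB ih

lemma iterSum_add_subset (A : Finset G) (k l : ℕ) :
    iterSum k A + iterSum l A ⊆ iterSum (k + l) A := by
  induction k with
  | zero =>
    intro x hx
    rw [Finset.mem_add] at hx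
    obtain ⟨y, hy, z, hz, rfl⟩ := hx
    simp only [iterSum, mem_singleton] at hy
    subst hy
    simpa using hz
  | succ n ih =>
    intro x hx
    rw [Finset.mem_add] at hx
    obtain ⟨y, hy, z, hz, rfl⟩ := hx
    simp only [iterSum, Finset.mem_add] at hy
    obtain ⟨a, ha, b, hb, rfl⟩ := hy
    have hmem : b + z ∈ iterSum (n + l) A := ih (Finset.add_mem_add hb hz)
    have h2 : a + (b + z) ∈ A + iterSum (n + l) A := Finset.add_mem_add ha hmem
    have h3 : n + 1 + l = (n + l) + 1 := by omega
    rw [h3]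
    show a + b + z ∈ A + iterSum (n + l) A
    rwa [add_assoc]

lemma card_iterSum_prime {q : ℕ} (hq : q.Prime) {S : Finset (ZMod q)} (hS : S.Nonempty)
    (k : ℕ) : min q (k * (#S - 1) + 1) ≤ #(iterSum k S) := by
  induction k with
  | zero =>
    simpa [iterSum] using min_le_right q 1
  | succ n ih =>
    have h1 := ZMod.cauchy_davenport hq hS (iterSum_nonempty hS n)
    have h2 : 1 ≤ #S := hS.card_pos
    show min q ((n + 1) * (#S - 1) + 1) ≤ #(S + iterSum n S)
    have : (n + 1) * (#S - 1) + 1 = #S + (n * (#S - 1) + 1) - 1 := by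
      rw [Nat.succ_mul]
      omega
    rw [this]
    omega

end Aux

section Prod

variable {α β : Type*} [AddCommGroup α] [AddCommGroup β] [DecidableEq α] [DecidableEq β]

lemma prodAddProd (s₁ s₂ : Finset α) (t₁ t₂ : Finset β) :
    (s₁ ×ˢ t₁) + (s₂ ×ˢ t₂) = (s₁ + s₂) ×ˢ (t₁ + t₂) := by
  ext ⟨x, y⟩
  constructor
  · intro hxy
    rw [Finset.mem_add] at hxy
    obtain ⟨u, hu, v, hv, huv⟩ := hxy
    rw [Finset.mem_product] at hu hv
    rw [Prod.ext_iff] at huv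
    rw [Finset.mem_product]
    constructor
    · rw [Finset.mem_add]
      exact ⟨u.1, hu.1, v.1, hv.1, huv.1⟩
    · rw [Finset.mem_add]
      exact ⟨u.2, hu.2, v.2, hv.2, huv.2⟩
  · intro hxy
    rw [Finset.mem_product] at hxy
    obtain ⟨hx, hy⟩ := hxy
    rw [Finset.mem_add] at hx hy
    obtain ⟨a₁, ha₁, a₂, ha₂, h1⟩ := hx
    obtain ⟨b₁, hb₁, b₂, hb₂, h2⟩ := hy
    rw [Finset.mem_add]
    exact ⟨(a₁, b₁), Finset.mem_product.2 ⟨ha₁, hb₁⟩, (a₂, b₂),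
      Finset.mem_product.2 ⟨ha₂, hb₂⟩, by rw [Prod.ext_iff]; exact ⟨h1, h2⟩⟩

lemma iterSum_singleton (x : α) (k : ℕ) : iterSum k ({x} : Finset α) = {k • x} := by
  induction k with
  | zero => simp [iterSum]
  | succ n ih =>
    show {x} + iterSum n {x} = _
    rw [ih, Finset.singleton_add_singleton, succ_nsmul']

lemma iterSum_prod (x : α) (T : Finset β) (k : ℕ) :
    iterSum k (({x} : Finset α) ×ˢ T) = ({k • x} : Finset α) ×ˢ iterSum k T := by
  induction k with
  | zero =>
    ext ⟨a, b⟩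
    simp [iterSum, Prod.ext_iff]
  | succ n ih =>
    show ({x} : Finset α) ×ˢ T + _ = _
    rw [ih, prodAddProd, Finset.singleton_add_singleton, succ_nsmul']
    rfl

end Prod

section Lower

variable {q : ℕ}

/-- The key lower bound: any `(q+1)`-subset of `ZMod 3 × ZMod q` has `h`-fold sumset of
size at least `(8q-7)/3`. -/
lemma lower_bound (hq : q.Prime) (h : ℕ) (hh : 3 ≤ h)
    (A : Finset (ZMod 3 × ZMod q)) (hA : #A = q + 1) :
    8 * q ≤ 3 * #(foldSum h A) + 7 := by
  classical
  obtain ⟨k, rfl⟩ : ∃ k, h = k + 3 := ⟨h - 3, by omega⟩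
  set n : ZMod 3 → ℕ := fun i => #(A.filter fun z => z.1 = i) with hn
  have hsum : n 0 + n 1 + n 2 = q + 1 := by
    have hfib := Finset.card_eq_sum_card_fiberwise
      (f := Prod.fst) (s := A) (t := (Finset.univ : Finset (ZMod 3)))
      (fun x _ => mem_univ _)
    rw [hA, show (Finset.univ : Finset (ZMod 3)) = {0, 1, 2} from by decide,
      Finset.sum_insert (by decide), Finset.sum_insert (by decide),
      Finset.sum_singleton] at hfib
    simp only [hn]
    omega
  haveI : NeZero q := ⟨hq.pos.ne'⟩
  have hle : ∀ i : ZMod 3, n i ≤ q := by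
    intro i
    have hsub' : A.filter (fun z => z.1 = i) ⊆
        ({i} : Finset (ZMod 3)) ×ˢ (Finset.univ : Finset (ZMod q)) := by
      intro z hz
      rw [Finset.mem_filter] at hz
      rw [Finset.mem_product, Finset.mem_singleton]
      exact ⟨hz.2, Finset.mem_univ _⟩
    have hcc := Finset.card_le_card hsub'
    rwa [Finset.card_product, Finset.card_singleton, Finset.card_univ, ZMod.card,
      one_mul] at hcc
  have hle0 := hle 0
  have hle1 := hle 1
  have hle2 := hle 2
  -- choose α with maximal fiber, β second
  suffices H : ∀ α β : ZMod 3, α ≠ β → q + 1 ≤ 3 * n α → q + 1 ≤ n α + 2 * n β →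
      1 ≤ n β → 8 * q ≤ 3 * #(foldSum (k + 3) A) + 7 by
    rcases le_total (n 0) (n 1) with h01 | h01 <;>
    rcases le_total (n 1) (n 2) with h12 | h12 <;>
    rcases le_total (n 0) (n 2) with h02 | h02 <;>
    first
      | exact H 0 1 (by decide) (by omega) (by omega) (by omega)
      | exact H 0 2 (by decide) (by omega) (by omega) (by omega)
      | exact H 1 0 (by decide) (by omega) (by omega) (by omega)
      | exact H 1 2 (by decide) (by omega) (by omega) (by omega)
      | exact H 2 0 (by decide) (by omega) (by omega) (by omega)
      | exact H 2 1 (by decide) (by omega) (by omega) (by omega)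
  intro α β hαβ ha hab hb
  -- fibers as subsets of ZMod q
  set Fa : Finset (ZMod q) := (A.filter fun z => z.1 = α).image Prod.snd with hFa
  set Fb : Finset (ZMod q) := (A.filter fun z => z.1 = β).image Prod.snd with hFb
  have hinj : ∀ γ : ZMod 3, Set.InjOn Prod.snd
      ((A.filter fun z => z.1 = γ : Finset (ZMod 3 × ZMod q)) : Set (ZMod 3 × ZMod q)) := by
    intro γ x hx y hy hxy
    simp only [coe_filter, Set.mem_setOf_eq] at hx hy
    exact Prod.ext (hx.2.trans hy.2.symm) hxy
  have hcFa : #Fa = n α := Finset.card_image_of_injOn (hinj α)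
  have hcFb : #Fb = n β := Finset.card_image_of_injOn (hinj β)
  have hFane : Fa.Nonempty := card_pos.1 (by omega)
  have hFbne : Fb.Nonempty := card_pos.1 (by omega)
  have hsub : ∀ γ : ZMod 3, ({γ} : Finset (ZMod 3)) ×ˢ
      ((A.filter fun z => z.1 = γ).image Prod.snd) ⊆ A := by
    rintro γ ⟨u, v⟩ huv
    simp only [Finset.mem_product, Finset.mem_singleton, Finset.mem_image,
      Finset.mem_filter] at huv
    obtain ⟨hu, z, ⟨hzA, hz1⟩, hz2⟩ := huv
    have hz : z = (u, v) := Prod.ext (hz1.trans hu.symm) hz2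
    rwa [← hz]
  -- the three cosets
  have key : ∀ i j : ℕ, i + j = k + 3 →
      (({i • α + j • β} : Finset (ZMod 3)) ×ˢ (iterSum i Fa + iterSum j Fb))
        ⊆ iterSum (k + 3) A := by
    intro i j hij
    rw [← Finset.singleton_add_singleton, ← prodAddProd, ← iterSum_prod, ← iterSum_prod]
    calc iterSum i (({α} : Finset (ZMod 3)) ×ˢ Fa) + iterSum j (({β} : Finset (ZMod 3)) ×ˢ Fb)
        ⊆ iterSum i A + iterSum j A :=
          Finset.add_subset_add (iterSum_mono (hsub α) i) (iterSum_mono (hsub β) j)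
      _ ⊆ iterSum (i + j) A := iterSum_add_subset A i j
      _ = iterSum (k + 3) A := by rw [hij]
  -- distinctness of first coordinates
  have hne12 : (k + 3) • α + 0 • β ≠ (k + 2) • α + 1 • β := by
    have : ∀ κ a b : ZMod 3, a ≠ b → (κ + 3) * a + 0 * b ≠ (κ + 2) * a + 1 * b := by decide
    simpa [nsmul_eq_mul, Nat.cast_add] using this (k : ZMod 3) α β hαβ
  have hne13 : (k + 3) • α + 0 • β ≠ (k + 1) • α + 2 • β := by
    have : ∀ κ a b : ZMod 3, a ≠ b → (κ + 3) * a + 0 * b ≠ (κ + 1) * a + 2 * b := by decide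
    simpa [nsmul_eq_mul, Nat.cast_add] using this (k : ZMod 3) α β hαβ
  have hne23 : (k + 2) • α + 1 • β ≠ (k + 1) • α + 2 • β := by
    have : ∀ κ a b : ZMod 3, a ≠ b → (κ + 2) * a + 1 * b ≠ (κ + 1) * a + 2 * b := by decide
    simpa [nsmul_eq_mul, Nat.cast_add] using this (k : ZMod 3) α β hαβ
  -- disjointness of singleton-products
  have hdisj : ∀ (c c' : ZMod 3) (T U : Finset (ZMod q)), c ≠ c' →
      Disjoint (({c} : Finset (ZMod 3)) ×ˢ T) (({c'} : Finset (ZMod 3)) ×ˢ U) := by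
    intro c c' T U hcc
    rw [Finset.disjoint_left]
    rintro ⟨x, y⟩ hx hy
    simp only [Finset.mem_product, Finset.mem_singleton] at hx hy
    exact hcc (hx.1 ▸ hy.1 ▸ rfl)
  set T1 := iterSum (k + 3) Fa + iterSum 0 Fb with hT1
  set T2 := iterSum (k + 2) Fa + iterSum 1 Fb with hT2
  set T3 := iterSum (k + 1) Fa + iterSum 2 Fb with hT3
  set c1 : ZMod 3 := (k + 3) • α + 0 • β
  set c2 : ZMod 3 := (k + 2) • α + 1 • β
  set c3 : ZMod 3 := (k + 1) • α + 2 • β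
  have hsub1 := key (k + 3) 0 (by omega)
  have hsub2 := key (k + 2) 1 (by omega)
  have hsub3 := key (k + 1) 2 (by omega)
  have hunion : (({c1} : Finset (ZMod 3)) ×ˢ T1) ∪ (({c2} : Finset (ZMod 3)) ×ˢ T2)
      ∪ (({c3} : Finset (ZMod 3)) ×ˢ T3) ⊆ iterSum (k + 3) A := by
    refine Finset.union_subset (Finset.union_subset ?_ ?_) ?_ <;> assumption
  have hcard : #((({c1} : Finset (ZMod 3)) ×ˢ T1) ∪ (({c2} : Finset (ZMod 3)) ×ˢ T2)
      ∪ (({c3} : Finset (ZMod 3)) ×ˢ T3)) = #T1 + #T2 + #T3 := by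
    rw [Finset.card_union_of_disjoint, Finset.card_union_of_disjoint]
    · simp [Finset.card_product]
    · exact hdisj _ _ _ _ hne12
    · rw [Finset.disjoint_union_left]
      exact ⟨hdisj _ _ _ _ hne13, hdisj _ _ _ _ hne23⟩
  have hbig : #T1 + #T2 + #T3 ≤ #(foldSum (k + 3) A) := by
    rw [foldSum_eq_iterSum, ← hcard]
    exact Finset.card_le_card hunion
  -- Cauchy-Davenport bounds on each T
  have cd : ∀ i j : ℕ, min q (i * (#Fa - 1) + j * (#Fb - 1) + 1)
      ≤ #(iterSum i Fa + iterSum j Fb) := by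
    intro i j
    have h1 := ZMod.cauchy_davenport hq (iterSum_nonempty hFane i) (iterSum_nonempty hFbne j)
    have h2 := card_iterSum_prime hq hFane i
    have h3 := card_iterSum_prime hq hFbne j
    omega
  have b1 : min q (3 * (#Fa - 1) + 1) ≤ #T1 := by
    refine le_trans ?_ (cd (k + 3) 0)
    have : 3 * (#Fa - 1) ≤ (k + 3) * (#Fa - 1) := Nat.mul_le_mul_right _ (by omega)
    omega
  have b2 : min q (2 * (#Fa - 1) + (#Fb - 1) + 1) ≤ #T2 := by
    refine le_trans ?_ (cd (k + 2) 1)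
    have : 2 * (#Fa - 1) ≤ (k + 2) * (#Fa - 1) := Nat.mul_le_mul_right _ (by omega)
    omega
  have b3 : min q ((#Fa - 1) + 2 * (#Fb - 1) + 1) ≤ #T3 := by
    refine le_trans ?_ (cd (k + 1) 2)
    have : 1 * (#Fa - 1) ≤ (k + 1) * (#Fa - 1) := Nat.mul_le_mul_right _ (by omega)
    omega
  have hq2 := hq.two_le
  omega

end Lower

theorem stmt5 (h C : ℕ) (hh : 3 ≤ h) (hC : 1 ≤ C) :
    ∃ (G : Type) (iA : AddCommGroup G) (iF : Fintype G) (iD : DecidableEq G) (m : ℕ),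
      h + 2 ≤ m ∧ m ≤ @Fintype.card G iF ∧
        @rhoHat G iA iD m h + C ≤ @rho G iA iD m h := by
  classical
  obtain ⟨q, hqge, hq⟩ := Nat.exists_infinite_primes (2 * C + h + 10)
  haveI : NeZero q := ⟨hq.pos.ne'⟩
  refine ⟨ZMod 3 × ZMod q, inferInstance, inferInstance, inferInstance, q + 1, by omega, ?_, ?_⟩
  · rw [Fintype.card_prod, ZMod.card, ZMod.card]
    omega
  -- upper bound for rhoHat
  set Astar : Finset (ZMod 3 × ZMod q) :=
    insert (1, 0) (({0} : Finset (ZMod 3)) ×ˢ (Finset.univ : Finset (ZMod q))) with hAstar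
  have hmem : ((1 : ZMod 3), (0 : ZMod q)) ∉
      (({0} : Finset (ZMod 3)) ×ˢ (Finset.univ : Finset (ZMod q))) := by
    simp only [Finset.mem_product, Finset.mem_singleton]
    intro hcon
    exact one_ne_zero hcon.1
  have hcardA : #Astar = q + 1 := by
    rw [hAstar, Finset.card_insert_of_notMem hmem, Finset.card_product,
      Finset.card_singleton, Finset.card_univ, ZMod.card, one_mul]
  have hrsub : restSum h Astar ⊆ ({0, 1} : Finset (ZMod 3)) ×ˢ (Finset.univ : Finset (ZMod q)) := by
    intro s hs
    simp only [restSum, Finset.mem_image, Finset.mem_powersetCard] at hs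
    obtain ⟨B, ⟨hBsub, hBcard⟩, rfl⟩ := hs
    simp only [Finset.mem_product, Finset.mem_univ, and_true, Finset.mem_insert,
      Finset.mem_singleton]
    rw [Prod.fst_sum]
    have hsplit := Finset.sum_filter_add_sum_filter_not B (fun x => x = (1, 0))
      (fun x => x.1)
    have hz : ∑ x ∈ B.filter (fun x => ¬ x = (1, 0)), x.1 = 0 := by
      apply Finset.sum_eq_zero
      intro x hx
      simp only [Finset.mem_filter] at hx
      have := hBsub hx.1
      rw [hAstar, Finset.mem_insert] at this
      rcases this with h1 | h2
      · exact absurd h1 hx.2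
      · simp only [Finset.mem_product, Finset.mem_singleton] at h2
        exact h2.1
    have hfsub : B.filter (fun x => x = (1, 0)) ⊆ {((1 : ZMod 3), (0 : ZMod q))} := by
      intro x hx
      simp only [Finset.mem_filter] at hx
      simp [hx.2]
    rw [Finset.subset_singleton_iff] at hfsub
    rcases hfsub with he | he
    · rw [he] at hsplit
      simp only [Finset.sum_empty, zero_add] at hsplit
      left; rw [← hsplit, hz]
    · rw [he] at hsplit
      simp only [Finset.sum_singleton] at hsplit
      right; rw [← hsplit, hz, add_zero]
  have hrhoHat : rhoHat (ZMod 3 × ZMod q) (q + 1) h ≤ 2 * q := by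
    have h1 : rhoHat (ZMod 3 × ZMod q) (q + 1) h ≤ #(restSum h Astar) :=
      Nat.sInf_le ⟨Astar, hcardA, rfl⟩
    have h2 : #(restSum h Astar)
        ≤ #((({0, 1} : Finset (ZMod 3))) ×ˢ (Finset.univ : Finset (ZMod q))) :=
      Finset.card_le_card hrsub
    have h3 : #((({0, 1} : Finset (ZMod 3))) ×ˢ (Finset.univ : Finset (ZMod q))) = 2 * q := by
      rw [Finset.card_product, Finset.card_univ, ZMod.card]
      norm_num
    omega
  have hrho : 8 * q ≤ 3 * rho (ZMod 3 × ZMod q) (q + 1) h + 7 := by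
    have hne : {k | ∃ A : Finset (ZMod 3 × ZMod q),
        A.card = q + 1 ∧ (foldSum h A).card = k}.Nonempty := by
      obtain ⟨B, -, hB⟩ := Finset.exists_subset_card_eq (s := (Finset.univ : Finset (ZMod 3 × ZMod q))) (n := q + 1)
        (by rw [Finset.card_univ, Fintype.card_prod, ZMod.card, ZMod.card]; omega)
      exact ⟨_, B, hB, rfl⟩
    obtain ⟨A, hA, hAf⟩ := Nat.sInf_mem hne
    have := lower_bound hq h hh A hA
    rw [rho, ← hAf]
    exact this
  omega
end

section
/- Let G be a finite abelian group of order n and type (n₁,…,n_r), i.e., G ≅ ℤ/n₁ℤ × ⋯ × ℤ/n_rℤ with 2 ≤ n₁ | n₂ | ⋯ | n_r. For every integer m with 1 ≤ m ≤ n and every integer h ≥ 1, the minimum size of the h-fold signed sumset satisfies ρ±(G,m,h) ≤ u±(G,m,h). -/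
/-- The `h`-fold signed sumset of a finite subset `A = {a₁,…,a_m}` of an abelian group:
all sums `λ₁a₁ + ⋯ + λ_m a_m` with integer coefficients satisfying `|λ₁| + ⋯ + |λ_m| = h`. -/
def sgnSum {G : Type*} [AddCommGroup G] (h : ℕ) (A : Finset G) : Set G :=
  {x | ∃ c : G → ℤ, (∑ a ∈ A, (c a).natAbs) = h ∧ (∑ a ∈ A, c a • a) = x}

/-- `ρ±(G,m,h)`: the minimum size of the `h`-fold signed sumset over all `m`-subsets of `G`. -/
noncomputable def rhoPM (G : Type*) [AddCommGroup G] (m h : ℕ) : ℕ :=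
  sInf {k | ∃ A : Finset G, A.card = m ∧ (sgnSum h A).ncard = k}

/-- `f_d(m,h) = (h⌈m/d⌉ - h + 1)·d`. -/
def fDiv (m h d : ℕ) : ℕ := (h * ((m + d - 1) / d) - h + 1) * d


lemma aux_modeq_natAbs (z : ℤ) : z ≡ (z.natAbs : ℤ) [ZMOD 2] := by
  rcases Int.natAbs_eq z with hz | hz
  · rw [← hz]
  · rw [Int.modEq_iff_dvd]
    exact ⟨-z, by omega⟩

lemma aux_sum_modeq {α : Type*} (s : Finset α) (f g : α → ℤ)
    (H : ∀ a ∈ s, f a ≡ g a [ZMOD 2]) :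
    (∑ a ∈ s, f a) ≡ (∑ a ∈ s, g a) [ZMOD 2] := by
  classical
  induction s using Finset.cons_induction with
  | empty => simp
  | cons a s ha ih =>
    rw [Finset.sum_cons, Finset.sum_cons]
    exact (H a (Finset.mem_cons_self a s)).add
      (ih fun b hb => H b (Finset.mem_cons_of_mem hb))

lemma aux_key (q c h : ℕ) (hq : 1 ≤ q) (hc : 1 ≤ c) (hh : 1 ≤ h) (hcq : c ≤ q) :
    ∃ X Y : Finset (ZMod q), c ≤ X.card ∧ Y.card ≤ h * (c - 1) + 1 ∧
      ∀ w : ZMod q → ℤ, (∑ x ∈ X, (w x).natAbs) ≤ h →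
        (∑ x ∈ X, w x) ≡ (h : ℤ) [ZMOD 2] → (∑ x ∈ X, w x • x) ∈ Y := by
  haveI : NeZero q := ⟨by omega⟩
  classical
  by_cases hcase : q ≤ h * (c - 1) + 1
  · refine ⟨Finset.univ, Finset.univ, ?_, ?_, fun _ _ _ => Finset.mem_univ _⟩
    · rw [Finset.card_univ, ZMod.card]; exact hcq
    · rw [Finset.card_univ, ZMod.card]; exact hcase
  push_neg at hcase
  by_cases hh1 : h = 1
  · -- h = 1 : symmetric construction
    subst hh1
    set k : ℕ := c / 2 with hk
    set XZ : Finset ℤ :=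
      if 2 ∣ c then (Finset.Icc (-(k:ℤ)) k).erase 0 else Finset.Icc (-(k:ℤ)) k with hXZ
    have hIcc_card : (Finset.Icc (-(k:ℤ)) k).card = 2*k+1 := by
      rw [Int.card_Icc]; omega
    have hXZcard : XZ.card = c := by
      rw [hXZ]; split_ifs with h2
      · rw [Finset.card_erase_of_mem (by simp), hIcc_card]; omega
      · rw [hIcc_card]; omega
    have hmem_abs : ∀ z ∈ XZ, z.natAbs ≤ k := by
      intro z hz; rw [hXZ] at hz; split_ifs at hz with h2
      · have := Finset.mem_of_mem_erase hz
        simp only [Finset.mem_Icc] at this; omega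
      · simp only [Finset.mem_Icc] at hz; omega
    have hsymm : ∀ z ∈ XZ, -z ∈ XZ := by
      intro z hz; rw [hXZ] at hz ⊢; split_ifs at hz ⊢ with h2
      · rw [Finset.mem_erase] at hz ⊢
        simp only [Finset.mem_Icc] at hz ⊢; omega
      · simp only [Finset.mem_Icc] at hz ⊢; omega
    have hinj : ∀ a ∈ XZ, ∀ b ∈ XZ, ((a : ZMod q) = (b : ZMod q)) → a = b := by
      intro a ha b hb hab
      have hdvd : (q:ℤ) ∣ b - a := by
        rwa [ZMod.intCast_eq_intCast_iff, Int.modEq_iff_dvd] at hab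
      have ha' := hmem_abs a ha
      have hb' := hmem_abs b hb
      have : b - a = 0 := Int.eq_zero_of_abs_lt_dvd hdvd (by rw [abs_lt]; omega)
      omega
    set X : Finset (ZMod q) := XZ.image (fun z : ℤ => (z : ZMod q)) with hX
    refine ⟨X, X, ?_, ?_, ?_⟩
    · rw [hX, Finset.card_image_of_injOn (fun a ha b hb => hinj a ha b hb), hXZcard]
    · have : X.card ≤ XZ.card := Finset.card_image_le
      omega
    · intro w hw1 hw2
      have hex : ∃ x ∈ X, w x ≠ 0 := by
        by_contra hall
        push_neg at hall
        rw [Finset.sum_congr rfl hall] at hw2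
        simp only [Finset.sum_const_zero] at hw2
        rw [Int.ModEq] at hw2
        omega
      obtain ⟨x₀, hx₀X, hx₀⟩ := hex
      have hzero : ∀ x ∈ X, x ≠ x₀ → w x = 0 := by
        intro x hx hne
        by_contra hwx
        have hsub : ({x₀, x} : Finset (ZMod q)) ⊆ X := by
          intro y hy; simp only [Finset.mem_insert, Finset.mem_singleton] at hy
          rcases hy with rfl|rfl <;> assumption
        have hsum : ∑ y ∈ ({x₀, x} : Finset (ZMod q)), (w y).natAbs
            ≤ ∑ y ∈ X, (w y).natAbs := Finset.sum_le_sum_of_subset hsub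
        rw [Finset.sum_pair (Ne.symm hne)] at hsum
        omega
      have hsum1 : (∑ x ∈ X, w x • x) = w x₀ • x₀ :=
        Finset.sum_eq_single_of_mem x₀ hx₀X
          (fun b hb hbne => by rw [hzero b hb hbne, zero_smul])
      have habs : (w x₀).natAbs = 1 := by
        have hle : (w x₀).natAbs ≤ ∑ x ∈ X, (w x).natAbs :=
          Finset.single_le_sum (f := fun y => (w y).natAbs) (fun _ _ => Nat.zero_le _) hx₀X
        omega
      obtain ⟨z₀, hz₀, hz₀e⟩ := Finset.mem_image.mp hx₀X
      rcases Int.natAbs_eq_iff.mp habs with h1 | h1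
      · rw [hsum1, h1, Nat.cast_one, one_smul]; exact hx₀X
      · rw [hsum1, h1]
        refine Finset.mem_image.mpr ⟨-z₀, hsymm z₀ hz₀, ?_⟩
        rw [← hz₀e]
        push_cast
        rw [neg_smul, one_smul]
  · -- h ≥ 2 : arithmetic progression with step 2
    have hh2 : 2 ≤ h := by omega
    have h2c : 2 * (c-1) < q := by
      have := Nat.mul_le_mul_right (c - 1) hh2
      omega
    set B : ℕ := h * (c - 1) with hB
    set XZ : Finset ℤ := (Finset.range c).image (fun j : ℕ => 2*(j:ℤ) - ((c:ℤ) - 1)) with hXZ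
    set YZ : Finset ℤ := (Finset.range (B+1)).image (fun j : ℕ => 2*(j:ℤ) - (B:ℤ)) with hYZ
    have hXZprop : ∀ z ∈ XZ, z.natAbs ≤ c - 1 ∧ z ≡ ((c:ℤ) - 1) [ZMOD 2] := by
      intro z hz
      rw [hXZ, Finset.mem_image] at hz
      obtain ⟨j, hj, rfl⟩ := hz
      rw [Finset.mem_range] at hj
      constructor
      · omega
      · rw [Int.modEq_iff_dvd]; omega
    have hXZcard : XZ.card = c := by
      rw [hXZ, Finset.card_image_of_injOn, Finset.card_range]
      intro a _ b _ hab
      simp only at hab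
      have : (a:ℤ) = b := by omega
      exact_mod_cast this
    have hinj : ∀ a ∈ XZ, ∀ b ∈ XZ, ((a : ZMod q) = (b : ZMod q)) → a = b := by
      intro a ha b hb hab
      have hdvd : (q:ℤ) ∣ b - a := by
        rwa [ZMod.intCast_eq_intCast_iff, Int.modEq_iff_dvd] at hab
      have ha' := (hXZprop a ha).1
      have hb' := (hXZprop b hb).1
      have : b - a = 0 := Int.eq_zero_of_abs_lt_dvd hdvd (by rw [abs_lt]; omega)
      omega
    set X : Finset (ZMod q) := XZ.image (fun z : ℤ => (z : ZMod q)) with hX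
    set Y : Finset (ZMod q) := YZ.image (fun z : ℤ => (z : ZMod q)) with hY
    refine ⟨X, Y, ?_, ?_, ?_⟩
    · rw [hX, Finset.card_image_of_injOn (fun a ha b hb => hinj a ha b hb), hXZcard]
    · calc Y.card ≤ YZ.card := Finset.card_image_le
        _ ≤ (Finset.range (B+1)).card := Finset.card_image_le
        _ = B + 1 := Finset.card_range _
    · intro w hw1 hw2
      set s : ℤ := ∑ z ∈ XZ, w ((z : ZMod q)) * z with hs
      have hsum_eq : (∑ x ∈ X, w x • x) = ((s : ℤ) : ZMod q) := by
        rw [hX, Finset.sum_image hinj, hs]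
        push_cast
        exact Finset.sum_congr rfl (fun z _ => by rw [zsmul_eq_mul])
      have habs_sum : (∑ z ∈ XZ, |w ((z : ZMod q))|) ≤ (h:ℤ) := by
        have : (∑ z ∈ XZ, |w ((z : ZMod q))|) = ((∑ x ∈ X, (w x).natAbs : ℕ) : ℤ) := by
          rw [hX, Finset.sum_image hinj]
          push_cast [Int.natCast_natAbs]
          rfl
        rw [this]
        exact_mod_cast hw1
      have habs : |s| ≤ (B:ℤ) := by
        calc |s| ≤ ∑ z ∈ XZ, |w ((z : ZMod q)) * z| := Finset.abs_sum_le_sum_abs _ _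
          _ ≤ ∑ z ∈ XZ, |w ((z : ZMod q))| * ((c:ℤ) - 1) := by
              refine Finset.sum_le_sum ?_
              intro z hz
              rw [abs_mul]
              refine mul_le_mul_of_nonneg_left ?_ (abs_nonneg _)
              have := (hXZprop z hz).1
              rw [← Int.natCast_natAbs]
              omega
          _ = (∑ z ∈ XZ, |w ((z : ZMod q))|) * ((c:ℤ) - 1) := by rw [Finset.sum_mul]
          _ ≤ (h:ℤ) * ((c:ℤ) - 1) := by
              refine mul_le_mul_of_nonneg_right habs_sum ?_
              omega
          _ = (B:ℤ) := by rw [hB]; push_cast [Nat.cast_sub hc]; ring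
      have hpar : s ≡ (B:ℤ) [ZMOD 2] := by
        have h1 : s ≡ (∑ z ∈ XZ, w ((z : ZMod q)) * ((c:ℤ) - 1)) [ZMOD 2] := by
          rw [hs]
          exact aux_sum_modeq _ _ _ (fun z hz => Int.ModEq.mul_left _ ((hXZprop z hz).2))
        have h2 : (∑ z ∈ XZ, w ((z : ZMod q)) * ((c:ℤ) - 1))
            = (∑ x ∈ X, w x) * ((c:ℤ) - 1) := by
          rw [hX, Finset.sum_image hinj, Finset.sum_mul]
        have h3 : (∑ x ∈ X, w x) * ((c:ℤ) - 1) ≡ (h:ℤ) * ((c:ℤ) - 1) [ZMOD 2] :=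
          Int.ModEq.mul_right _ hw2
        have h4 : (h:ℤ) * ((c:ℤ) - 1) = (B:ℤ) := by
          rw [hB]; push_cast [Nat.cast_sub hc]; ring
        calc s ≡ _ [ZMOD 2] := h1
          _ = _ := h2
          _ ≡ (h:ℤ) * ((c:ℤ) - 1) [ZMOD 2] := h3
          _ = (B:ℤ) := h4
      have hsY : s ∈ YZ := by
        rw [hYZ, Finset.mem_image]
        have hdvd : (2:ℤ) ∣ (B:ℤ) - s := hpar.dvd
        obtain ⟨t, ht⟩ := hdvd
        have hb := abs_le.mp habs
        refine ⟨((s + (B:ℤ))/2).toNat, Finset.mem_range.mpr ?_, ?_⟩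
        · omega
        · omega
      rw [hsum_eq]
      exact Finset.mem_image_of_mem _ hsY

lemma aux_natAbs_sum_le {α : Type*} (s : Finset α) (f : α → ℤ) :
    (∑ a ∈ s, f a).natAbs ≤ ∑ a ∈ s, (f a).natAbs := by
  classical
  induction s using Finset.cons_induction with
  | empty => simp
  | cons a s ha ih =>
    rw [Finset.sum_cons, Finset.sum_cons]
    calc (f a + ∑ b ∈ s, f b).natAbs ≤ (f a).natAbs + (∑ b ∈ s, f b).natAbs :=
          Int.natAbs_add_le _ _
      _ ≤ (f a).natAbs + ∑ b ∈ s, (f b).natAbs := by omega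


lemma aux_ncard_preimage {G G' : Type*} [AddCommGroup G] [Fintype G] [AddCommGroup G']
    [DecidableEq G'] (f : G →+ G') (S : Finset G') (hS : ∀ s ∈ S, ∃ x, f x = s) :
    (f ⁻¹' ↑S).ncard = S.card * Nat.card f.ker := by
  classical
  induction S using Finset.cons_induction with
  | empty => simp
  | cons a S ha ih =>
    have hsplit : f ⁻¹' ↑(Finset.cons a S ha) = f ⁻¹' {a} ∪ f ⁻¹' ↑S := by
      rw [Finset.coe_cons, Set.insert_eq, Set.preimage_union]
    obtain ⟨x₀, hx₀⟩ := hS a (Finset.mem_cons_self a S)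
    have hfiber : f ⁻¹' {a} = (fun k => x₀ + k) '' (f.ker : Set G) := by
      ext x
      simp only [Set.mem_preimage, Set.mem_singleton_iff, Set.mem_image, SetLike.mem_coe,
        AddMonoidHom.mem_ker]
      constructor
      · intro hx
        exact ⟨x - x₀, by simp [map_sub, hx, hx₀], by abel⟩
      · rintro ⟨k, hk, rfl⟩
        simp [map_add, hk, hx₀]
    have hdisj : Disjoint (f ⁻¹' {a}) (f ⁻¹' ↑S) := by
      rw [Set.disjoint_left]
      rintro x hx1 hx2
      simp only [Set.mem_preimage, Set.mem_singleton_iff] at hx1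
      simp only [Set.mem_preimage, Finset.mem_coe] at hx2
      exact ha (hx1 ▸ hx2)
    have hkercard : ((f.ker : Set G)).ncard = Nat.card f.ker := by
      rw [← Nat.card_coe_set_eq]
      rfl
    rw [hsplit, Set.ncard_union_eq hdisj (Set.toFinite _) (Set.toFinite _), hfiber,
      Set.ncard_image_of_injective _ (add_right_injective x₀), hkercard,
      ih (fun s hs => hS s (Finset.mem_cons_of_mem hs)), Finset.card_cons]
    ring

lemma aux_main {r : ℕ} (n : Fin r → ℕ) (hn2 : ∀ i, 2 ≤ n i) (lst : Fin r)
    (e : Fin r → ℕ) (he : ∀ i, e i ∣ n i) (he1 : ∀ i, 1 ≤ e i)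
    (d m h : ℕ) (hd : d = ∏ i, e i) (hd1 : 1 ≤ d) (hm1 : 1 ≤ m) (hh : 1 ≤ h)
    (hlast : e lst * m ≤ d * n lst) :
    rhoPM ((i : Fin r) → ZMod (n i)) m h ≤ fDiv m h d := by
  classical
  haveI : ∀ i, NeZero (n i) := fun i => ⟨by have := hn2 i; omega⟩
  set q : Fin r → ℕ := fun i => n i / e i with hq
  have hqe : ∀ i, q i * e i = n i := fun i => Nat.div_mul_cancel (he i)
  have hq1 : ∀ i, 1 ≤ q i := by
    intro i
    rcases Nat.eq_zero_or_pos (q i) with h0 | h0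
    · exfalso
      have h1 := hqe i
      rw [h0, zero_mul] at h1
      have := hn2 i
      omega
    · exact h0
  haveI : ∀ i, NeZero (q i) := fun i => ⟨by have := hq1 i; omega⟩
  have hqd : ∀ i, q i ∣ n i := fun i => Nat.div_dvd_of_dvd (he i)
  let φ : ((i : Fin r) → ZMod (n i)) →+ ((i : Fin r) → ZMod (q i)) :=
    { toFun := fun v i => ZMod.castHom (hqd i) (ZMod (q i)) (v i)
      map_zero' := by funext i; exact map_zero (ZMod.castHom (hqd i) (ZMod (q i)))
      map_add' := fun a b => by
        funext i
        exact map_add (ZMod.castHom (hqd i) (ZMod (q i))) (a i) (b i) }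
  have hφsurj : Function.Surjective φ := by
    intro y
    have hs : ∀ i, ∃ x : ZMod (n i), ZMod.castHom (hqd i) (ZMod (q i)) x = y i :=
      fun i => ZMod.ringHom_surjective _ (y i)
    choose x hx using hs
    exact ⟨x, funext hx⟩
  have hker : Nat.card φ.ker = d := by
    have h1 : Nat.card ((i : Fin r) → ZMod (n i))
        = Nat.card (((i : Fin r) → ZMod (n i)) ⧸ φ.ker) * Nat.card φ.ker :=
      AddSubgroup.card_eq_card_quotient_mul_card_addSubgroup _
    have h2 : Nat.card (((i : Fin r) → ZMod (n i)) ⧸ φ.ker)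
        = Nat.card ((i : Fin r) → ZMod (q i)) :=
      Nat.card_congr (QuotientAddGroup.quotientKerEquivOfSurjective φ hφsurj).toEquiv
    rw [h2, Nat.card_pi, Nat.card_pi] at h1
    simp only [Nat.card_zmod] at h1
    have h3 : (∏ i, n i) = (∏ i, q i) * d := by
      rw [hd, ← Finset.prod_mul_distrib]
      exact Finset.prod_congr rfl (fun i _ => (hqe i).symm)
    have hQpos : 0 < ∏ i, q i := Finset.prod_pos (fun i _ => hq1 i)
    rw [h3] at h1
    exact (Nat.eq_of_mul_eq_mul_left hQpos h1.symm)
  set c : ℕ := (m + d - 1) / d with hcdef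
  have hc1 : 1 ≤ c := (Nat.one_le_div_iff (by omega)).mpr (by omega)
  have hdm := Nat.div_add_mod (m + d - 1) d
  rw [← hcdef] at hdm
  have hdm2 : (m + d - 1) % d < d := Nat.mod_lt _ (by omega)
  have hmcd : m ≤ c * d := by
    have h3 : c * d = d * c := Nat.mul_comm _ _
    omega
  have hmdq : m ≤ d * q lst := by
    have h4 : e lst * (d * q lst) = d * n lst := by rw [← hqe lst]; ring
    have h5 := hlast
    rw [← h4] at h5
    exact Nat.le_of_mul_le_mul_left h5 (by have := he1 lst; omega)
  have hcq : c ≤ q lst := by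
    have h5 : d * c < d * (q lst + 1) := by
      have h6 : d * (q lst + 1) = d * q lst + d := by ring
      omega
    exact Nat.lt_succ_iff.mp (Nat.lt_of_mul_lt_mul_left h5)
  obtain ⟨X, Y, hXcard, hYcard, hXY⟩ := aux_key (q lst) c h (hq1 lst) hc1 hh hcq
  set XG : Finset ((i : Fin r) → ZMod (q i)) :=
    X.image (fun x => Pi.single lst x) with hXG
  set YG : Finset ((i : Fin r) → ZMod (q i)) :=
    Y.image (fun x => Pi.single lst x) with hYG
  have hsingle_inj : Function.Injective
      (fun x : ZMod (q lst) => (Pi.single lst x : (i : Fin r) → ZMod (q i))) :=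
    fun a b hab => Pi.single_injective lst hab
  have hXGcard : XG.card = X.card := Finset.card_image_of_injective _ hsingle_inj
  have hpre : ((φ : ((i : Fin r) → ZMod (n i)) → _) ⁻¹' ↑XG).ncard = XG.card * d := by
    rw [aux_ncard_preimage φ XG (fun s _ => hφsurj s), hker]
  have hm_le : m ≤ ((φ : ((i : Fin r) → ZMod (n i)) → _) ⁻¹' ↑XG).ncard := by
    rw [hpre, hXGcard]
    calc m ≤ c * d := hmcd
      _ ≤ X.card * d := Nat.mul_le_mul_right _ hXcard
  set P : Finset ((i : Fin r) → ZMod (n i)) :=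
    ((φ : ((i : Fin r) → ZMod (n i)) → _) ⁻¹' ↑XG).toFinset with hP
  have hPcard : P.card = ((φ : ((i : Fin r) → ZMod (n i)) → _) ⁻¹' ↑XG).ncard :=
    (Set.ncard_eq_toFinset_card' _).symm
  obtain ⟨A, hAP, hAcard⟩ := Finset.exists_subset_card_eq (show m ≤ P.card by omega)
  have hAmem : ∀ a ∈ A, φ a ∈ XG := by
    intro a ha
    have h7 := hAP ha
    rw [hP, Set.mem_toFinset] at h7
    exact h7
  set ξ : ((i : Fin r) → ZMod (n i)) → ZMod (q lst) := fun v => φ v lst with hξ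
  have hξX : ∀ a ∈ A, ξ a ∈ X ∧ φ a = Pi.single lst (ξ a) := by
    intro a ha
    obtain ⟨x, hx, hxe⟩ := Finset.mem_image.mp (hAmem a ha)
    have h8 : ξ a = x := by
      rw [hξ]
      simp only [← hxe, Pi.single_eq_same]
    constructor
    · rw [h8]; exact hx
    · rw [h8, hxe]
  have hsub : sgnSum h A ⊆ (φ : ((i : Fin r) → ZMod (n i)) → _) ⁻¹' ↑YG := by
    rintro x ⟨co, hco1, hco2⟩
    rw [Set.mem_preimage, ← hco2]
    set w : ZMod (q lst) → ℤ := fun y => ∑ a ∈ A.filter (fun a => ξ a = y), co a with hw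
    have hmaps : ∀ a ∈ A, ξ a ∈ X := fun a ha => (hξX a ha).1
    have hw1 : (∑ y ∈ X, (w y).natAbs) ≤ h := by
      calc (∑ y ∈ X, (w y).natAbs)
          ≤ ∑ y ∈ X, ∑ a ∈ A.filter (fun a => ξ a = y), (co a).natAbs :=
            Finset.sum_le_sum (fun y _ => aux_natAbs_sum_le _ _)
        _ = ∑ a ∈ A, (co a).natAbs := Finset.sum_fiberwise_of_maps_to hmaps _
        _ = h := hco1
    have hw2 : (∑ y ∈ X, w y) ≡ (h:ℤ) [ZMOD 2] := by
      have h9 : (∑ y ∈ X, w y) = ∑ a ∈ A, co a := Finset.sum_fiberwise_of_maps_to hmaps _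
      rw [h9]
      calc (∑ a ∈ A, co a) ≡ (∑ a ∈ A, ((co a).natAbs : ℤ)) [ZMOD 2] :=
            aux_sum_modeq _ _ _ (fun a _ => aux_modeq_natAbs _)
        _ = ((∑ a ∈ A, (co a).natAbs : ℕ) : ℤ) := by push_cast; rfl
        _ = (h:ℤ) := by rw [hco1]
    have hmem := hXY w hw1 hw2
    have hsum3 : (∑ y ∈ X, w y • y) = ∑ a ∈ A, co a • ξ a := by
      rw [← Finset.sum_fiberwise_of_maps_to hmaps (fun a => co a • ξ a)]
      refine Finset.sum_congr rfl (fun y hy => ?_)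
      rw [hw, Finset.sum_smul]
      refine Finset.sum_congr rfl (fun a ha => ?_)
      rw [(Finset.mem_filter.mp ha).2]
    have hφx : φ (∑ a ∈ A, co a • a) = Pi.single lst (∑ y ∈ X, w y • y) := by
      rw [map_sum, hsum3]
      have h10 : ∀ a ∈ A, φ (co a • a) = Pi.single lst (co a • ξ a) := by
        intro a ha
        rw [map_zsmul, (hξX a ha).2, Pi.single_smul]
      rw [Finset.sum_congr rfl h10]
      have h11 : ∀ v : ZMod (q lst),
          (Pi.single lst v : (i : Fin r) → ZMod (q i)) = AddMonoidHom.single _ lst v :=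
        fun v => (AddMonoidHom.single_apply (f := fun i => ZMod (q i)) lst v).symm
      simp only [h11]
      rw [← map_sum]
    rw [hφx]
    exact Finset.mem_coe.mpr (Finset.mem_image_of_mem _ hmem)
  have hYGcard : YG.card ≤ h * (c-1) + 1 := le_trans Finset.card_image_le hYcard
  have hbound : (sgnSum h A).ncard ≤ fDiv m h d := by
    have h12 : (sgnSum h A).ncard ≤ ((φ : ((i : Fin r) → ZMod (n i)) → _) ⁻¹' ↑YG).ncard :=
      Set.ncard_le_ncard hsub (Set.toFinite _)
    have h13 : ((φ : ((i : Fin r) → ZMod (n i)) → _) ⁻¹' ↑YG).ncard = YG.card * d := by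
      rw [aux_ncard_preimage φ YG (fun s _ => hφsurj s), hker]
    have h14 : YG.card * d ≤ (h * (c-1) + 1) * d := Nat.mul_le_mul_right _ hYGcard
    have h15 : fDiv m h d = (h * (c-1) + 1) * d := by
      rw [fDiv, ← hcdef]
      congr 1
      have h16 : h * (c - 1) = h * c - h * 1 := Nat.mul_sub h c 1
      omega
    omega
  have hmemρ : (sgnSum h A).ncard ∈
      {k | ∃ B : Finset ((i : Fin r) → ZMod (n i)), B.card = m ∧ (sgnSum h B).ncard = k} :=
    ⟨A, hAcard, rfl⟩
  exact le_trans (Nat.sInf_le hmemρ) hbound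

theorem stmt7 (r : ℕ) (hr : 1 ≤ r) (n : Fin r → ℕ)
    (h2 : 2 ≤ n ⟨0, hr⟩)
    (hdvd : ∀ i j : Fin r, i ≤ j → n i ∣ n j)
    (N m h : ℕ) (hN : N = ∏ i, n i) (hm1 : 1 ≤ m) (hmN : m ≤ N) (hh : 1 ≤ h) :
    rhoPM ((i : Fin r) → ZMod (n i)) m h ≤
      sInf {k | ∃ d ∈ N.divisors,
        (∃ e : Fin r → ℕ, (∀ i, e i ∣ n i) ∧ d = ∏ i, e i ∧
          e ⟨r - 1, by omega⟩ * m ≤ d * n ⟨r - 1, by omega⟩) ∧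
        k = fDiv m h d} := by
  classical
  have hNpos : 0 < N := lt_of_lt_of_le hm1 hmN
  have hn2 : ∀ i, 2 ≤ n i := by
    intro i
    have hdvd0 : n ⟨0, hr⟩ ∣ n i := hdvd ⟨0, hr⟩ i (by simp [Fin.le_def])
    have hni : n i ≠ 0 := by
      intro h0
      rw [hN] at hNpos
      have h1 : (∏ j, n j) = 0 := Finset.prod_eq_zero (Finset.mem_univ i) h0
      omega
    exact le_trans h2 (Nat.le_of_dvd (by omega) hdvd0)
  refine le_csInf ?_ ?_
  · refine ⟨fDiv m h N, N, Nat.mem_divisors_self N (by omega),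
      ⟨n, fun i => dvd_rfl, hN, ?_⟩, rfl⟩
    calc n ⟨r - 1, by omega⟩ * m ≤ n ⟨r - 1, by omega⟩ * N :=
          Nat.mul_le_mul_left _ hmN
      _ = N * n ⟨r - 1, by omega⟩ := Nat.mul_comm _ _
  · rintro b ⟨d, hdmem, ⟨e, he, hde, hlast⟩, rfl⟩
    have hd0 : d ≠ 0 := by
      intro h0
      obtain ⟨hdvdN, hN0⟩ := Nat.mem_divisors.mp hdmem
      rw [h0] at hdvdN
      exact hN0 (Nat.eq_zero_of_zero_dvd hdvdN)
    have he1 : ∀ i, 1 ≤ e i := by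
      intro i
      rcases Nat.eq_zero_or_pos (e i) with h0 | h0
      · exfalso
        apply hd0
        rw [hde]
        exact Finset.prod_eq_zero (Finset.mem_univ i) h0
      · exact h0
    exact aux_main n hn2 ⟨r - 1, by omega⟩ e he he1 d m h hde (by omega) hm1 hh hlast
end

section
/- For every finite abelian group G of order n, every integer m with 1 ≤ m ≤ n, and every integer h ≥ 1, the minimum of |h±A| over all m-element subsets A of G is attained on a subset that is symmetric, near-symmetric, or asymmetric; that is, ρ±(G,m,h) = min{|h±A| : A ⊆ G, |A| = m, and A is symmetric, near-symmetric, or asymmetric}. -/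
/-- `A` is symmetric: `A = -A`. -/
def SymSet {G : Type*} [AddCommGroup G] [DecidableEq G] (A : Finset G) : Prop :=
  A = A.image fun x => -x

/-- `A` is near-symmetric: it becomes symmetric after removing one of its elements. -/
def NearSymSet {G : Type*} [AddCommGroup G] [DecidableEq G] (A : Finset G) : Prop :=
  ∃ a ∈ A, SymSet (A.erase a)

/-- `A` is asymmetric: `A ∩ (-A) = ∅`. -/
def AsymSet {G : Type*} [AddCommGroup G] [DecidableEq G] (A : Finset G) : Prop :=
  Disjoint A (A.image fun x => -x)

section Aux

variable {G : Type*} [AddCommGroup G] [DecidableEq G]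

lemma sum_split {M : Type*} [AddCommMonoid M] (A : Finset G) {u v : G}
    (hu : u ∈ A) (hv : v ∈ A) (huv : u ≠ v) (f : G → M) :
    ∑ a ∈ A, f a = f u + (f v + ∑ a ∈ (A.erase u).erase v, f a) := by
  rw [Finset.add_sum_erase (A.erase u) f (Finset.mem_erase.mpr ⟨huv.symm, hv⟩),
    Finset.add_sum_erase A f hu]

lemma exists_k (a b : ℤ) :
    ∃ k : ℤ, (a + k).natAbs + (b + k).natAbs = a.natAbs + b.natAbs + 2 := by
  rcases le_or_gt 0 a with ha | ha <;> rcases le_or_gt 0 b with hb | hb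
  · exact ⟨1, by omega⟩
  · exact ⟨-b + 1, by omega⟩
  · exact ⟨-a + 1, by omega⟩
  · exact ⟨-1, by omega⟩

lemma pad2 {h : ℕ} {A : Finset G} {s x : G} (hs : s ∈ A) (hs' : -s ∈ A)
    (hx : x ∈ sgnSum h A) : x ∈ sgnSum (h + 2) A := by
  obtain ⟨c, hc1, hc2⟩ := hx
  by_cases hss : -s = s
  · -- two-torsion case: s + s = 0
    have h2s : s + s = 0 := by nth_rewrite 2 [← hss]; exact add_neg_cancel s
    set d : ℤ := if 0 ≤ c s then 2 else -2 with hd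
    refine ⟨Function.update c s (c s + d), ?_, ?_⟩
    · rw [← Finset.add_sum_erase A _ hs] at hc1 ⊢
      rw [Function.update_self]
      have hrest : ∑ a ∈ A.erase s, ((Function.update c s (c s + d)) a).natAbs
          = ∑ a ∈ A.erase s, (c a).natAbs := by
        refine Finset.sum_congr rfl fun a ha => ?_
        rw [Function.update_of_ne (Finset.mem_erase.mp ha).1]
      rw [hrest]
      have : (c s + d).natAbs = (c s).natAbs + 2 := by
        rcases le_or_gt 0 (c s) with h0 | h0 <;> simp only [hd, if_pos, if_neg, h0] <;> omega
      omega
    · rw [← Finset.add_sum_erase A _ hs] at hc2 ⊢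
      rw [Function.update_self]
      have hrest : ∑ a ∈ A.erase s, ((Function.update c s (c s + d)) a) • a
          = ∑ a ∈ A.erase s, (c a) • a := by
        refine Finset.sum_congr rfl fun a ha => ?_
        rw [Function.update_of_ne (Finset.mem_erase.mp ha).1]
      rw [hrest, add_smul]
      have hds : d • s = 0 := by
        have h2 : (2 : ℤ) • s = 0 := by
          rw [two_smul]; exact h2s
        rcases le_or_gt 0 (c s) with h0 | h0
        · simp only [hd, if_pos h0]; exact h2
        · simp only [hd, if_neg (not_le.mpr h0)]
          rw [neg_smul, h2, neg_zero]
      rw [hds, add_zero]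
      exact hc2
  · -- s ≠ -s : adjust both coefficients by k
    obtain ⟨k, hk⟩ := exists_k (c s) (c (-s))
    have hsne : s ≠ -s := fun h => hss h.symm
    set c' := Function.update (Function.update c s (c s + k)) (-s) (c (-s) + k) with hc'
    have hcs : c' s = c s + k := by
      rw [hc', Function.update_of_ne hsne, Function.update_self]
    have hcns : c' (-s) = c (-s) + k := by rw [hc', Function.update_self]
    have hrest : ∀ a ∈ (A.erase s).erase (-s), c' a = c a := by
      intro a ha
      obtain ⟨ha1, ha2⟩ := Finset.mem_erase.mp ha
      obtain ⟨ha3, _⟩ := Finset.mem_erase.mp ha2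
      rw [hc', Function.update_of_ne ha1, Function.update_of_ne ha3]
    refine ⟨c', ?_, ?_⟩
    · rw [sum_split A hs hs' hsne] at hc1 ⊢
      rw [hcs, hcns]
      have : ∑ a ∈ (A.erase s).erase (-s), (c' a).natAbs
          = ∑ a ∈ (A.erase s).erase (-s), (c a).natAbs :=
        Finset.sum_congr rfl fun a ha => by rw [hrest a ha]
      rw [this]
      omega
    · rw [sum_split A hs hs' hsne] at hc2 ⊢
      rw [hcs, hcns]
      have : ∑ a ∈ (A.erase s).erase (-s), c' a • a
          = ∑ a ∈ (A.erase s).erase (-s), c a • a :=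
        Finset.sum_congr rfl fun a ha => by rw [hrest a ha]
      rw [this, ← hc2, add_smul, add_smul]
      have : k • (-s) = -(k • s) := smul_neg k s
      rw [this]
      abel

lemma pad_many {A : Finset G} {s x : G} (hs : s ∈ A) (hs' : -s ∈ A) :
    ∀ (k w : ℕ), x ∈ sgnSum w A → x ∈ sgnSum (w + 2 * k) A := by
  intro k
  induction k with
  | zero => intro w hw; simpa using hw
  | succ n ih =>
    intro w hw
    have h1 : x ∈ sgnSum (w + 2 * n + 2) A := pad2 hs hs' (ih w hw)
    have : w + 2 * (n + 1) = w + 2 * n + 2 := by ring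
    rw [this]
    exact h1

lemma combine {h : ℕ} {A : Finset G} {t₁ t₂ s x : G}
    (ht₁ : t₁ ∈ A) (hnt₁ : -t₁ ∉ A) (ht₂ : t₂ ∈ A) (h12 : t₁ ≠ t₂)
    (hs : s ∈ A) (hs' : -s ∈ A)
    (hx : x ∈ sgnSum h (insert (-t₁) (A.erase t₂))) : x ∈ sgnSum h A := by
  obtain ⟨c, hc1, hc2⟩ := hx
  have hni : -t₁ ∉ A.erase t₂ := fun hmem => hnt₁ (Finset.mem_of_mem_erase hmem)
  have ht₁e : t₁ ∈ A.erase t₂ := Finset.mem_erase.mpr ⟨h12, ht₁⟩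
  rw [Finset.sum_insert hni, ← Finset.add_sum_erase (A.erase t₂) _ ht₁e] at hc1 hc2
  set E := (A.erase t₂).erase t₁ with hE
  set c' := Function.update (Function.update c t₂ 0) t₁ (c t₁ - c (-t₁)) with hc'
  have hct₁ : c' t₁ = c t₁ - c (-t₁) := by rw [hc', Function.update_self]
  have hct₂ : c' t₂ = 0 := by
    rw [hc', Function.update_of_ne (fun he => h12 he.symm), Function.update_self]
  have hrest : ∀ a ∈ E, c' a = c a := by
    intro a ha
    obtain ⟨ha1, ha2⟩ := Finset.mem_erase.mp ha
    obtain ⟨ha3, _⟩ := Finset.mem_erase.mp ha2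
    rw [hc', Function.update_of_ne ha1, Function.update_of_ne ha3]
  have hEcomm : (A.erase t₁).erase t₂ = E := by
    rw [hE]; ext a; simp only [Finset.mem_erase]; tauto
  -- the weight of c' over A
  have hw : ∑ a ∈ A, (c' a).natAbs
      = (c t₁ - c (-t₁)).natAbs + ∑ a ∈ E, (c a).natAbs := by
    rw [sum_split A ht₁ ht₂ h12, hct₁, hct₂, hEcomm]
    have : ∑ a ∈ E, (c' a).natAbs = ∑ a ∈ E, (c a).natAbs :=
      Finset.sum_congr rfl fun a ha => by rw [hrest a ha]
    rw [this]
    simp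
  -- the value of c' over A
  have hv : ∑ a ∈ A, c' a • a = x := by
    rw [sum_split A ht₁ ht₂ h12, hct₁, hct₂, hEcomm]
    have : ∑ a ∈ E, c' a • a = ∑ a ∈ E, c a • a :=
      Finset.sum_congr rfl fun a ha => by rw [hrest a ha]
    rw [this, zero_smul, zero_add, ← hc2, sub_smul]
    have : c (-t₁) • (-t₁) = -(c (-t₁) • t₁) := smul_neg _ _
    rw [this]
    abel
  obtain ⟨k, hk⟩ : ∃ k : ℕ, h = (∑ a ∈ A, (c' a).natAbs) + 2 * k := by
    refine ⟨(h - ∑ a ∈ A, (c' a).natAbs) / 2, ?_⟩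
    rw [hw]
    omega
  rw [hk]
  exact pad_many hs hs' k _ ⟨c', rfl, hv⟩

lemma sym_of_closed {B : Finset G} (hB : ∀ x ∈ B, -x ∈ B) : SymSet B := by
  unfold SymSet
  ext x
  simp only [Finset.mem_image]
  constructor
  · intro hx; exact ⟨-x, hB x hx, neg_neg x⟩
  · rintro ⟨y, hy, rfl⟩; exact hB y hy

lemma reduce (h : ℕ) : ∀ n (A : Finset G), (A.filter fun a => -a ∉ A).card = n →
    ∃ B : Finset G, B.card = A.card ∧ (SymSet B ∨ NearSymSet B ∨ AsymSet B) ∧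
      sgnSum h B ⊆ sgnSum h A := by
  intro n
  induction n using Nat.strong_induction_on with
  | _ n ih =>
    intro A hn
    set T := A.filter (fun a => -a ∉ A) with hT
    by_cases hT0 : T.card = 0
    · -- A is symmetric
      refine ⟨A, rfl, Or.inl ?_, subset_rfl⟩
      apply sym_of_closed
      intro a ha
      by_contra hc
      have hmem : a ∈ T := Finset.mem_filter.mpr ⟨ha, hc⟩
      rw [Finset.card_eq_zero.mp hT0] at hmem
      exact absurd hmem (Finset.notMem_empty a)
    · by_cases hT1 : T.card = 1
      · -- A is near-symmetric
        obtain ⟨t, hTt⟩ := Finset.card_eq_one.mp hT1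
        have htT : t ∈ T := by rw [hTt]; exact Finset.mem_singleton_self t
        have htA : t ∈ A := (Finset.mem_filter.mp htT).1
        have htn : -t ∉ A := (Finset.mem_filter.mp htT).2
        refine ⟨A, rfl, Or.inr (Or.inl ⟨t, htA, ?_⟩), subset_rfl⟩
        apply sym_of_closed
        intro a ha
        obtain ⟨hat, haA⟩ := Finset.mem_erase.mp ha
        have haT : a ∉ T := by
          rw [hTt]
          simpa using hat
        have hna : -a ∈ A := by
          by_contra hc
          exact haT (Finset.mem_filter.mpr ⟨haA, hc⟩)
        refine Finset.mem_erase.mpr ⟨?_, hna⟩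
        intro hcontra
        apply htn
        rw [← hcontra, neg_neg]
        exact haA
      · by_cases hS : ∀ a ∈ A, -a ∉ A
        · -- A is asymmetric
          refine ⟨A, rfl, Or.inr (Or.inr ?_), subset_rfl⟩
          rw [AsymSet, Finset.disjoint_left]
          intro a ha hmem
          obtain ⟨b, hb, rfl⟩ := Finset.mem_image.mp hmem
          exact hS b hb ha
        · -- main reduction step
          push_neg at hS
          obtain ⟨s, hsA, hs'A⟩ := hS
          have h2 : 1 < T.card := by omega
          obtain ⟨t₁, ht₁T, t₂, ht₂T, hne⟩ := Finset.one_lt_card.mp h2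
          have ht₁A : t₁ ∈ A := (Finset.mem_filter.mp ht₁T).1
          have ht₁n : -t₁ ∉ A := (Finset.mem_filter.mp ht₁T).2
          have ht₂A : t₂ ∈ A := (Finset.mem_filter.mp ht₂T).1
          have ht₂n : -t₂ ∉ A := (Finset.mem_filter.mp ht₂T).2
          set A' := insert (-t₁) (A.erase t₂) with hA'
          have hniA' : -t₁ ∉ A.erase t₂ := fun hmem => ht₁n (Finset.mem_of_mem_erase hmem)
          have hcard : A'.card = A.card := by
            rw [hA', Finset.card_insert_of_notMem hniA', Finset.card_erase_of_mem ht₂A]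
            have : 1 ≤ A.card := Finset.card_pos.mpr ⟨t₂, ht₂A⟩
            omega
          -- the asymmetric part of A' is strictly smaller
          have hsub : A'.filter (fun a => -a ∉ A') ⊆ (T.erase t₁).erase t₂ := by
            intro a ha
            obtain ⟨haA', han⟩ := Finset.mem_filter.mp ha
            rcases Finset.mem_insert.mp haA' with rfl | hae
            · exfalso
              apply han
              rw [neg_neg]
              exact Finset.mem_insert_of_mem (Finset.mem_erase.mpr ⟨hne, ht₁A⟩)
            · obtain ⟨hat₂, haA⟩ := Finset.mem_erase.mp hae
              have hnaA : -a ∉ A := by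
                intro hnaA
                rcases eq_or_ne (-a) t₂ with he | hne2
                · apply ht₂n
                  rw [← he, neg_neg]
                  exact haA
                · exact han (Finset.mem_insert_of_mem (Finset.mem_erase.mpr ⟨hne2, hnaA⟩))
              have haT : a ∈ T := Finset.mem_filter.mpr ⟨haA, hnaA⟩
              have hat₁ : a ≠ t₁ := by
                rintro rfl
                exact han (Finset.mem_insert_self _ _)
              exact Finset.mem_erase.mpr ⟨hat₂, Finset.mem_erase.mpr ⟨hat₁, haT⟩⟩
          have hT'card : (A'.filter (fun a => -a ∉ A')).card < n := by
            have h1 := Finset.card_le_card hsub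
            have h2' : ((T.erase t₁).erase t₂).card = T.card - 2 := by
              rw [Finset.card_erase_of_mem (Finset.mem_erase.mpr ⟨hne.symm, ht₂T⟩),
                Finset.card_erase_of_mem ht₁T]
              omega
            omega
          obtain ⟨B, hB1, hB2, hB3⟩ := ih _ hT'card A' rfl
          refine ⟨B, hB1.trans hcard, hB2, hB3.trans ?_⟩
          intro x hx
          exact combine ht₁A ht₁n ht₂A hne hsA hs'A hx

end Aux

theorem stmt9 (G : Type*) [AddCommGroup G] [Fintype G] [DecidableEq G]
    (m h : ℕ) (hm1 : 1 ≤ m) (hmn : m ≤ Fintype.card G) (hh : 1 ≤ h) :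
    rhoPM G m h =
      sInf {k | ∃ A : Finset G, A.card = m ∧
        (SymSet A ∨ NearSymSet A ∨ AsymSet A) ∧ (sgnSum h A).ncard = k} := by
  have hLne : {k | ∃ A : Finset G, A.card = m ∧ (sgnSum h A).ncard = k}.Nonempty := by
    obtain ⟨A, -, hA⟩ := Finset.exists_subset_card_eq (s := (Finset.univ : Finset G)) (n := m)
      (by simpa using hmn)
    exact ⟨(sgnSum h A).ncard, A, hA, rfl⟩
  have hmem : rhoPM G m h ∈ {k | ∃ A : Finset G, A.card = m ∧ (sgnSum h A).ncard = k} := by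
    rw [rhoPM]
    exact Nat.sInf_mem hLne
  obtain ⟨A₀, hA₀m, hA₀n⟩ := hmem
  obtain ⟨B, hB1, hB2, hB3⟩ := reduce h _ A₀ rfl
  have hBm : B.card = m := hB1.trans hA₀m
  have hle : (sgnSum h B).ncard ≤ rhoPM G m h := by
    rw [← hA₀n]
    exact Set.ncard_le_ncard hB3 (Set.toFinite _)
  have hge : rhoPM G m h ≤ (sgnSum h B).ncard := by
    rw [rhoPM]
    exact Nat.sInf_le ⟨B, hBm, rfl⟩
  have heq : (sgnSum h B).ncard = rhoPM G m h := le_antisymm hle hge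
  apply le_antisymm
  · -- rhoPM ≤ sInf RHS
    have hRne : {k | ∃ A : Finset G, A.card = m ∧
        (SymSet A ∨ NearSymSet A ∨ AsymSet A) ∧ (sgnSum h A).ncard = k}.Nonempty :=
      ⟨(sgnSum h B).ncard, B, hBm, hB2, rfl⟩
    obtain ⟨C, hC1, _, hC3⟩ := Nat.sInf_mem hRne
    rw [rhoPM]
    exact Nat.sInf_le ⟨C, hC1, hC3⟩
  · exact Nat.sInf_le ⟨B, hBm, hB2, heq⟩
end

section
/- For all positive integers n and m with m ≤ n, the minimum size of ΣA over all m-element subsets A of the cyclic group ℤ/nℤ satisfies ρ̂(ℤ/nℤ, m, ℕ₀) ≤ u(n, m, ℕ₀). -/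
/-- `ΣA`: the set of all subset sums of `A` (including the empty sum `0`). -/
def sigmaSum {G : Type*} [AddCommGroup G] [DecidableEq G] (A : Finset G) : Finset G :=
  A.powerset.image fun B => ∑ x ∈ B, x

/-- `ρ̂(G,m,ℕ₀)`: the minimum size of `ΣA` over all `m`-subsets of `G`. -/
noncomputable def rhoSigma (G : Type*) [AddCommGroup G] [DecidableEq G] (m : ℕ) : ℕ :=
  sInf {k | ∃ A : Finset G, A.card = m ∧ (sigmaSum A).card = k}

/-- `F_d(m) = (c·m - c²·d + 1)·d` where `c = ⌈(⌈m/d⌉ - 1)/2⌉` (note that for natural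
numbers `⌈(x - 1)/2⌉ = x / 2`, with `/` denoting floor division). -/
def bigF (m d : ℕ) : ℕ :=
  ((((m + d - 1) / d) / 2) * m - (((m + d - 1) / d) / 2) ^ 2 * d + 1) * d

/-- `u(n,m,ℕ₀) = min{F_d(m) : d ∣ n, d > 0}`. -/
noncomputable def uSigma (n m : ℕ) : ℕ :=
  sInf {k | ∃ d ∈ n.divisors, k = bigF m d}

lemma sum_div_block (h : ℕ → ℤ) (d : ℕ) (hd : 0 < d) (T : ℕ) :
    ∑ k ∈ Finset.range (T * d), h (k / d) = ∑ i ∈ Finset.range T, (d : ℤ) * h i := by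
  induction T with
  | zero => simp
  | succ T ih =>
    rw [Nat.succ_mul, Finset.sum_range_add, ih, Finset.sum_range_succ]
    congr 1
    have : ∀ x ∈ Finset.range d, h ((T * d + x) / d) = h T := by
      intro x hx
      simp only [Finset.mem_range] at hx
      rw [mul_comm T d, Nat.mul_add_div hd, Nat.div_eq_of_lt hx, add_zero]
    rw [Finset.sum_congr rfl this, Finset.sum_const, Finset.card_range]
    simp [mul_comm]

lemma exists_small (n m d : ℕ) (hm : 1 ≤ m) (hmn : m ≤ n) (hdvd : d ∣ n) (hd0 : 0 < d) :
    ∃ A : Finset (ZMod n), A.card = m ∧ (sigmaSum A).card ≤ bigF m d := by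
  have hn0 : 0 < n := lt_of_lt_of_le hm hmn
  haveI : NeZero n := ⟨by omega⟩
  obtain ⟨e, he⟩ : ∃ e, n / d = e := ⟨_, rfl⟩
  have hed : e * d = n := by rw [← he]; exact Nat.div_mul_cancel hdvd
  have he0 : 0 < e := by
    rcases Nat.eq_zero_or_pos e with h | h
    · rw [h] at hed; omega
    · exact h
  obtain ⟨q, hq⟩ : ∃ q, (m + d - 1) / d = q := ⟨_, rfl⟩
  have hq1 : q * d ≤ m + d - 1 := by rw [← hq]; exact Nat.div_mul_le_self _ _
  have hq2 : m + d - 1 < q * d + d := by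
    have h1 := Nat.div_add_mod (m + d - 1) d
    have h2 := Nat.mod_lt (m + d - 1) hd0
    rw [hq] at h1
    have : d * q = q * d := mul_comm _ _
    omega
  have hq0 : 1 ≤ q := by
    rcases Nat.eq_zero_or_pos q with h | h
    · rw [h] at hq2; simp at hq2; omega
    · exact h
  have hsub1 : (q - 1) * d = q * d - d := Nat.sub_one_mul q d
  have hm1 : (q - 1) * d < m := by omega
  have hm2 : m ≤ q * d := by omega
  have hqe : q ≤ e := by
    have hlt : q * d < e * d + d := by omega
    have : q * d < (e + 1) * d := by rw [add_mul, one_mul]; exact hlt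
    have := Nat.lt_of_mul_lt_mul_right this
    omega
  obtain ⟨c, hc⟩ : ∃ c, q / 2 = c := ⟨_, rfl⟩
  obtain ⟨t, ht⟩ : ∃ t, q - 1 - c = t := ⟨_, rfl⟩
  have htc : t + c = q - 1 := by omega
  obtain ⟨r, hrdef⟩ : ∃ r, m - (q - 1) * d = r := ⟨_, rfl⟩
  have hmr : m = (q - 1) * d + r := by omega
  have hr1 : 1 ≤ r := by omega
  have hrd : r ≤ d := by omega
  set S1n := ∑ i ∈ Finset.range t, (i + 1) with hS1n
  set S2n := ∑ i ∈ Finset.range c, i with hS2n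
  have hg1 : 2 * S1n = (t + 1) * t := by
    have h1 : S1n = ∑ i ∈ Finset.range (t + 1), i := by
      rw [Finset.sum_range_succ' (fun i => i) t]
      simp [hS1n]
    rw [h1, mul_comm, Finset.sum_range_id_mul_two]
    simp
  have hg2 : 2 * S2n = c * (c - 1) := by
    rw [hS2n, mul_comm, Finset.sum_range_id_mul_two]
  have hkey : (t + 1) * t + c * (c - 1) = 2 * (c * t) := by
    have h2 : q = 2 * c ∨ q = 2 * c + 1 := by omega
    rcases h2 with h | h
    · have hc1 : 1 ≤ c := by omega
      have ht' : t = c - 1 := by omega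
      obtain ⟨c', rfl⟩ : ∃ c', c = c' + 1 := ⟨c - 1, by omega⟩
      rw [ht']
      simp only [Nat.add_sub_cancel]
      ring
    · have ht' : t = c := by omega
      rw [ht']
      rcases Nat.eq_zero_or_pos c with h0 | h0
      · simp [h0]
      · obtain ⟨c', rfl⟩ : ∃ c', c = c' + 1 := ⟨c - 1, by omega⟩
        simp only [Nat.add_sub_cancel]
        ring
  have hS : S1n + S2n = c * t := by omega
  -- the construction
  set g : ℕ → ℤ := fun k => ((k / d : ℕ) : ℤ) - t with hgdef
  set f : ℕ → ℤ := fun k => g k + (e : ℤ) * ((k % d : ℕ) : ℤ) with hfdef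
  set φ : ℕ → ZMod n := fun k => ((f k : ℤ) : ZMod n) with hφdef
  have hinj : Set.InjOn φ (Finset.range m) := by
    intro k hk k' hk' hφeq
    simp only [Finset.coe_range, Set.mem_Iio] at hk hk'
    obtain ⟨u, hu⟩ : ∃ u, k / d = u := ⟨_, rfl⟩
    obtain ⟨v, hv⟩ : ∃ v, k' / d = v := ⟨_, rfl⟩
    obtain ⟨w1, hw1⟩ : ∃ w1, k % d = w1 := ⟨_, rfl⟩
    obtain ⟨w2, hw2⟩ : ∃ w2, k' % d = w2 := ⟨_, rfl⟩
    have hdiff : (n : ℤ) ∣ f k - f k' := by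
      rwa [hφdef, ← sub_eq_zero, ← Int.cast_sub, ZMod.intCast_zmod_eq_zero_iff_dvd] at hφeq
    have hfk : f k - f k' = ((u : ℤ) - (v : ℤ)) + (e : ℤ) * ((w1 : ℤ) - (w2 : ℤ)) := by
      simp only [hfdef, hgdef, hu, hv, hw1, hw2]; ring
    have hedvd : (e : ℤ) ∣ (n : ℤ) := ⟨d, by exact_mod_cast hed.symm⟩
    have h1 : (e : ℤ) ∣ (u : ℤ) - (v : ℤ) := by
      have h2 : (e : ℤ) ∣ f k - f k' := dvd_trans hedvd hdiff
      rw [hfk] at h2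
      have h3 : (e : ℤ) ∣ (e : ℤ) * ((w1 : ℤ) - (w2 : ℤ)) := Dvd.intro _ rfl
      exact (dvd_add_right h3).mp (by rwa [add_comm] at h2)
    have hdivlt : u < q := by rw [← hu]; exact (Nat.div_lt_iff_lt_mul hd0).mpr (by omega)
    have hdivlt' : v < q := by rw [← hv]; exact (Nat.div_lt_iff_lt_mul hd0).mpr (by omega)
    have hii : u = v := by
      have h0 : (u : ℤ) - (v : ℤ) = 0 := by
        apply Int.eq_zero_of_dvd_of_natAbs_lt_natAbs h1
        simp only [Int.natAbs_natCast]
        omega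
      omega
    have hjj : w1 = w2 := by
      rw [hfk, hii] at hdiff
      simp only [sub_self, zero_add] at hdiff
      have hnn : (n : ℤ) = (e : ℤ) * (d : ℤ) := by exact_mod_cast hed.symm
      rw [hnn] at hdiff
      have hd5 : (d : ℤ) ∣ (w1 : ℤ) - (w2 : ℤ) :=
        (mul_dvd_mul_iff_left (by exact_mod_cast he0.ne' : (e : ℤ) ≠ 0)).mp hdiff
      have hb1 : w1 < d := by rw [← hw1]; exact Nat.mod_lt k hd0
      have hb2 : w2 < d := by rw [← hw2]; exact Nat.mod_lt k' hd0
      have h0 : (w1 : ℤ) - (w2 : ℤ) = 0 := by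
        apply Int.eq_zero_of_dvd_of_natAbs_lt_natAbs hd5
        simp only [Int.natAbs_natCast]
        omega
      omega
    have e1 := Nat.div_add_mod k d
    have e2 := Nat.div_add_mod k' d
    rw [hu, hw1, hii, hjj] at e1
    rw [hv, hw2] at e2
    omega
  set A := (Finset.range m).image φ with hA
  refine ⟨A, ?_, ?_⟩
  · rw [hA, Finset.card_image_of_injOn hinj, Finset.card_range]
  -- bound on sigmaSum
  set Mz : ℤ := ∑ k ∈ Finset.range m, max ((t : ℤ) - ((k / d : ℕ) : ℤ)) 0 with hMz
  set Pz : ℤ := ∑ k ∈ Finset.range m, max (g k) 0 with hPz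
  set T := ((Finset.Icc (-Mz) Pz) ×ˢ Finset.range d).image
    (fun p : ℤ × ℕ => ((p.1 + (e : ℤ) * (p.2 : ℤ) : ℤ) : ZMod n)) with hT
  have hsub : sigmaSum A ⊆ T := by
    intro x hx
    simp only [sigmaSum, Finset.mem_image, Finset.mem_powerset] at hx
    obtain ⟨B, hB, rfl⟩ := hx
    set K := (Finset.range m).filter (fun k => φ k ∈ B) with hK
    have hKsub : K ⊆ Finset.range m := Finset.filter_subset _ _
    have hBK : B = K.image φ := by
      ext y
      constructor
      · intro hy
        have := hB hy
        rw [hA, Finset.mem_image] at this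
        obtain ⟨k, hk, rfl⟩ := this
        exact Finset.mem_image.2 ⟨k, Finset.mem_filter.2 ⟨hk, hy⟩, rfl⟩
      · intro hy
        rw [Finset.mem_image] at hy
        obtain ⟨k, hk, rfl⟩ := hy
        exact (Finset.mem_filter.mp hk).2
    have hinjK : Set.InjOn φ K := hinj.mono (by exact_mod_cast hKsub)
    have hsum : ∑ y ∈ B, y = ((∑ k ∈ K, f k : ℤ) : ZMod n) := by
      rw [hBK, Finset.sum_image hinjK, Int.cast_sum]
    set s : ℤ := ∑ k ∈ K, g k with hs
    set J : ℕ := ∑ k ∈ K, k % d with hJ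
    have hfs : ∑ k ∈ K, f k = s + (e : ℤ) * (J : ℤ) := by
      rw [hfdef]
      simp only []
      rw [Finset.sum_add_distrib, ← Finset.mul_sum]
      congr 1
      rw [hJ]
      push_cast
      rfl
    have hshi : s ≤ Pz := by
      calc s ≤ ∑ k ∈ K, max (g k) 0 := Finset.sum_le_sum (fun k _ => le_max_left _ _)
        _ ≤ Pz := Finset.sum_le_sum_of_subset_of_nonneg hKsub (fun k _ _ => le_max_right _ _)
    have hslo : -Mz ≤ s := by
      have h1 : ∑ k ∈ K, max ((t : ℤ) - ((k / d : ℕ) : ℤ)) 0 ≤ Mz :=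
        Finset.sum_le_sum_of_subset_of_nonneg hKsub (fun k _ _ => le_max_right _ _)
      have h2 : ∑ k ∈ K, (-(max ((t : ℤ) - ((k / d : ℕ) : ℤ)) 0)) ≤ s := by
        apply Finset.sum_le_sum
        intro k _
        have h3 : (t : ℤ) - ((k / d : ℕ) : ℤ) ≤ max ((t : ℤ) - ((k / d : ℕ) : ℤ)) 0 :=
          le_max_left _ _
        simp only [hgdef]
        omega
      rw [Finset.sum_neg_distrib] at h2
      omega
    refine Finset.mem_image.2 ⟨(s, J % d), ?_, ?_⟩
    · exact Finset.mem_product.2 ⟨Finset.mem_Icc.2 ⟨hslo, hshi⟩,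
        Finset.mem_range.2 (Nat.mod_lt _ hd0)⟩
    · rw [hsum, hfs, ← sub_eq_zero, ← Int.cast_sub, ZMod.intCast_zmod_eq_zero_iff_dvd]
      refine ⟨-((J / d : ℕ) : ℤ), ?_⟩
      have hJd : (J : ℤ) = ((J % d : ℕ) : ℤ) + (d : ℤ) * ((J / d : ℕ) : ℤ) := by
        exact_mod_cast (Nat.mod_add_div J d).symm
      have hnn : (n : ℤ) = (e : ℤ) * (d : ℤ) := by exact_mod_cast hed.symm
      rw [hJd, hnn]
      ring
  -- cardinality computation
  have htq : t ≤ q - 1 := by omega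
  have htdm : t * d ≤ m := by
    have h1 : t * d ≤ (q - 1) * d := Nat.mul_le_mul_right d htq
    omega
  have hMzval : Mz = ((d * S1n : ℕ) : ℤ) := by
    have step1 : Mz = ∑ k ∈ Finset.range (t * d), max ((t : ℤ) - ((k / d : ℕ) : ℤ)) 0 := by
      rw [hMz]
      symm
      apply Finset.sum_subset (Finset.range_subset_range.2 htdm)
      intro k _ hk
      simp only [Finset.mem_range, not_lt] at hk
      have h2 : t ≤ k / d := (Nat.le_div_iff_mul_le hd0).mpr hk
      exact max_eq_right (by omega)
    have step2 : ∑ k ∈ Finset.range (t * d), max ((t : ℤ) - ((k / d : ℕ) : ℤ)) 0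
        = ∑ k ∈ Finset.range (t * d), ((t : ℤ) - ((k / d : ℕ) : ℤ)) := by
      apply Finset.sum_congr rfl
      intro k hk
      simp only [Finset.mem_range] at hk
      have h2 : k / d < t := (Nat.div_lt_iff_lt_mul hd0).mpr hk
      exact max_eq_left (by omega)
    have step3 : ∑ k ∈ Finset.range (t * d), ((t : ℤ) - ((k / d : ℕ) : ℤ))
        = ∑ i ∈ Finset.range t, (d : ℤ) * ((t : ℤ) - (i : ℤ)) :=
      sum_div_block (fun i => (t : ℤ) - (i : ℤ)) d hd0 t
    have step4 : ∑ i ∈ Finset.range t, ((t : ℤ) - (i : ℤ)) = (S1n : ℤ) := by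
      have h3 : ∀ j ∈ Finset.range t, (t : ℤ) - (j : ℤ) = (((t - 1 - j : ℕ) : ℤ) + 1) := by
        intro j hj
        simp only [Finset.mem_range] at hj
        omega
      rw [Finset.sum_congr rfl h3, Finset.sum_range_reflect (fun j => ((j : ℤ) + 1)) t, hS1n]
      push_cast
      rfl
    rw [step1, step2, step3, ← Finset.mul_sum, step4]
    push_cast
    ring
  have hPzval : Pz = ((d * S2n + r * c : ℕ) : ℤ) := by
    have hsplit : Pz = ∑ k ∈ Finset.range ((q - 1) * d), max (g k) 0
        + ∑ k ∈ Finset.Ico ((q - 1) * d) m, max (g k) 0 := by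
      rw [hPz, Finset.range_eq_Ico, Finset.range_eq_Ico]
      exact (Finset.sum_Ico_consecutive _ (Nat.zero_le ((q - 1) * d)) (le_of_lt hm1)).symm
    have part1 : ∑ k ∈ Finset.range ((q - 1) * d), max (g k) 0 = (d : ℤ) * (S2n : ℤ) := by
      have hb : ∑ k ∈ Finset.range ((q - 1) * d), max (g k) 0
          = ∑ i ∈ Finset.range (q - 1), (d : ℤ) * max ((i : ℤ) - (t : ℤ)) 0 := by
        simp only [hgdef]
        exact sum_div_block (fun i => max ((i : ℤ) - (t : ℤ)) 0) d hd0 (q - 1)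
      rw [hb, ← htc, Finset.sum_range_add]
      have hz1 : ∑ i ∈ Finset.range t, (d : ℤ) * max ((i : ℤ) - (t : ℤ)) 0 = 0 := by
        apply Finset.sum_eq_zero
        intro i hi
        simp only [Finset.mem_range] at hi
        rw [max_eq_right (by omega : (i : ℤ) - (t : ℤ) ≤ 0), mul_zero]
      have hz2 : ∀ x ∈ Finset.range c,
          (d : ℤ) * max (((t + x : ℕ) : ℤ) - (t : ℤ)) 0 = (d : ℤ) * (x : ℤ) := by
        intro x hx
        have : ((t + x : ℕ) : ℤ) - (t : ℤ) = (x : ℤ) := by push_cast; ring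
        rw [this, max_eq_left (by positivity)]
      rw [hz1, Finset.sum_congr rfl hz2, ← Finset.mul_sum, zero_add, hS2n]
      push_cast
      rfl
    have part2 : ∑ k ∈ Finset.Ico ((q - 1) * d) m, max (g k) 0 = (r : ℤ) * (c : ℤ) := by
      have hcongr : ∀ k ∈ Finset.Ico ((q - 1) * d) m, max (g k) 0 = (c : ℤ) := by
        intro k hk
        simp only [Finset.mem_Ico] at hk
        have h1 : q - 1 ≤ k / d := (Nat.le_div_iff_mul_le hd0).mpr hk.1
        have h2 : k / d < q := (Nat.div_lt_iff_lt_mul hd0).mpr (by omega)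
        have h3 : k / d = q - 1 := by omega
        simp only [hgdef, h3]
        have h4 : ((q - 1 : ℕ) : ℤ) - (t : ℤ) = (c : ℤ) := by omega
        rw [h4]
        exact max_eq_left (by positivity)
      rw [Finset.sum_congr rfl hcongr, Finset.sum_const, Nat.card_Ico]
      have : m - (q - 1) * d = r := hrdef
      rw [this]
      simp [mul_comm]
    rw [hsplit, part1, part2]
    push_cast
    ring
  have hcard2 : (sigmaSum A).card ≤ (d * S2n + r * c + 1 + d * S1n) * d := by
    calc (sigmaSum A).card ≤ T.card := Finset.card_le_card hsub
      _ ≤ ((Finset.Icc (-Mz) Pz) ×ˢ Finset.range d).card := Finset.card_image_le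
      _ = (Finset.Icc (-Mz) Pz).card * d := by rw [Finset.card_product, Finset.card_range]
      _ = (d * S2n + r * c + 1 + d * S1n) * d := by
          rw [Int.card_Icc]
          congr 1
          have heq : Pz + 1 - (-Mz) = ((d * S2n + r * c + 1 + d * S1n : ℕ) : ℤ) := by
            rw [hMzval, hPzval]; push_cast; ring
          rw [heq, Int.toNat_natCast]
  refine le_trans hcard2 ?_
  rw [bigF, hq, hc]
  have hmeq : m = (t + c) * d + r := by rw [htc]; omega
  have hcm : c * m = c * c * d + (d * S1n + d * S2n + r * c) := by
    have h5 : c * ((t + c) * d + r) = (c * t) * d + c * c * d + r * c := by ring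
    rw [hmeq, h5, ← hS]
    ring
  have hpow : c ^ 2 * d = c * c * d := by ring
  have heq2 : c * m - c ^ 2 * d + 1 = d * S2n + r * c + 1 + d * S1n := by
    rw [hpow]; omega
  rw [heq2]

theorem stmt11 (n m : ℕ) (hn : 1 ≤ n) (hm : 1 ≤ m) (hmn : m ≤ n) :
    rhoSigma (ZMod n) m ≤ uSigma n m := by
  have hne : {k | ∃ d ∈ n.divisors, k = bigF m d}.Nonempty :=
    ⟨bigF m n, n, Nat.mem_divisors_self n (by omega), rfl⟩
  have hmem := Nat.sInf_mem hne
  obtain ⟨d, hd, hu⟩ := hmem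
  have hdvd : d ∣ n := (Nat.mem_divisors.mp hd).1
  have hd0 : 0 < d := Nat.pos_of_mem_divisors hd
  obtain ⟨A, hA, hAcard⟩ := exists_small n m d hm hmn hdvd hd0
  calc rhoSigma (ZMod n) m ≤ (sigmaSum A).card := Nat.sInf_le ⟨A, hA, rfl⟩
    _ ≤ bigF m d := hAcard
    _ = uSigma n m := hu.symm
end
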